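/- Let P be a program automaton over basic statements Stmt₀ with all states accepting, and let φ be a TSL(T) formula with predicate terms ρ and update terms υ. Let A_{¬φ_LTL} be a Büchi automaton over alphabet 2^{ρ∪υ} accepting exactly the words that satisfy the LTL formula ¬φ_LTL obtained from ¬φ by treating its predicate and update terms as atomic propositions. Then P satisfies φ if and only if the combined product P ⊗ A_{¬φ_LTL} has no feasible trace. -/

import Mathlib

namespace TSLMC

open scoped Classical

/-! ### Theories, function terms, assignments -/

/-- A theory: interpretation of function symbols, plus distinguished values true/false. -/
structure Thy (V F : Type) where
  ε : F → List V → V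
  vtrue : V
  vfalse : V

/-- Function terms over inputs `I`, cells `C` and function symbols `F`. -/
inductive FTerm (I C F : Type) : Type where
  | inp  : I → FTerm I C F
  | cell : C → FTerm I C F
  | app  : F → List (FTerm I C F) → FTerm I C F

/-- An assignment gives values to inputs and cells. -/
abbrev Assign (V I C : Type) := I ⊕ C → V

variable {V I C F Pi : Type}

/-- Evaluation of a function term under an assignment. -/
def FTerm.eval (T : Thy V F) (a : Assign V I C) : FTerm I C F → V
  | .inp i => a (.inl i)
  | .cell c => a (.inr c)
  | .app f ts => T.ε f (ts.attach.map fun t => t.1.eval T a)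
decreasing_by
  have := List.sizeOf_lt_of_mem t.2
  simp only [FTerm.app.sizeOf_spec]
  omega

/-- A predicate term is a function term evaluating only to true or false. -/
def IsPredTerm (T : Thy V F) (τ : FTerm I C F) : Prop :=
  ∀ a : Assign V I C, τ.eval T a = T.vtrue ∨ τ.eval T a = T.vfalse

/-- The theory contains (at least) equality, negation, conjunction and a true constant,
with their usual interpretations, and true ≠ false. -/
structure Ops (V F : Type) (T : Thy V F) where
  feq : F
  fneg : F
  fand : F
  ftrue : F
  heq : ∀ x y : V, T.ε feq [x, y] = if x = y then T.vtrue else T.vfalse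
  hneg : ∀ x : V, T.ε fneg [x] = if x = T.vtrue then T.vfalse else T.vtrue
  hand : ∀ x y : V, T.ε fand [x, y] = if x = T.vtrue ∧ y = T.vtrue then T.vtrue else T.vfalse
  htrue : T.ε ftrue [] = T.vtrue
  tne : T.vtrue ≠ T.vfalse

/-! ### TSL(T) formulas -/

/-- TSL(T) formulas (atoms: predicate terms and update terms `⟦c ↞ τ⟧`). -/
inductive TSL (I C F : Type) : Type where
  | pred : FTerm I C F → TSL I C F
  | upd  : C → FTerm I C F → TSL I C F
  | not  : TSL I C F → TSL I C F
  | and  : TSL I C F → TSL I C F → TSL I C F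
  | next : TSL I C F → TSL I C F
  | untl : TSL I C F → TSL I C F → TSL I C F

/-- `prevA init ζ t` is `ζ (t-1)`, with the fixed initial assignment at `t = 0`. -/
def prevA (init : Assign V I C) (ζ : ℕ → Assign V I C) : ℕ → Assign V I C
  | 0 => init
  | t + 1 => ζ t

/-- Satisfaction of a TSL(T) formula over a computation at a time point. -/
def TSL.sat (T : Thy V F) (init : Assign V I C) (ζ : ℕ → Assign V I C) :
    TSL I C F → ℕ → Prop
  | .pred τ, t => τ.eval T (ζ t) = T.vtrue
  | .upd c τ, t => τ.eval T (prevA init ζ t) = ζ t (.inr c)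
  | .not φ, t => ¬ φ.sat T init ζ t
  | .and φ ψ, t => φ.sat T init ζ t ∧ ψ.sat T init ζ t
  | .next φ, t => φ.sat T init ζ (t + 1)
  | .untl φ ψ, t => ∃ t', t ≤ t' ∧ ψ.sat T init ζ t' ∧
      ∀ t'', t ≤ t'' → t'' < t' → φ.sat T init ζ t''

/-- The list of predicate terms appearing in a TSL(T) formula. -/
def TSL.predList : TSL I C F → List (FTerm I C F)
  | .pred τ => [τ]
  | .upd _ _ => []
  | .not φ => φ.predList
  | .and φ ψ => φ.predList ++ ψ.predList
  | .next φ => φ.predList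
  | .untl φ ψ => φ.predList ++ ψ.predList

/-- The list of update terms appearing in a TSL(T) formula. -/
def TSL.updList : TSL I C F → List (C × FTerm I C F)
  | .pred _ => []
  | .upd c τ => [(c, τ)]
  | .not φ => φ.updList
  | .and φ ψ => φ.updList ++ ψ.updList
  | .next φ => φ.updList
  | .untl φ ψ => φ.updList ++ ψ.updList

/-! ### LTL -/

/-- LTL formulas over atomic propositions `A`. -/
inductive LTL (A : Type) : Type where
  | atom : A → LTL A
  | not : LTL A → LTL A
  | and : LTL A → LTL A → LTL A
  | next : LTL A → LTL A
  | untl : LTL A → LTL A → LTL A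

/-- Standard LTL satisfaction over words of sets of atomic propositions. -/
def LTL.sat (w : ℕ → Set A) : LTL A → ℕ → Prop
  | .atom a, t => a ∈ w t
  | .not φ, t => ¬ φ.sat w t
  | .and φ ψ, t => φ.sat w t ∧ ψ.sat w t
  | .next φ, t => φ.sat w (t + 1)
  | .untl φ ψ, t => ∃ t', t ≤ t' ∧ ψ.sat w t' ∧ ∀ t'', t ≤ t'' → t'' < t' → φ.sat w t''

/-- Atomic propositions: predicate terms and update terms. -/
abbrev AP (I C F : Type) := FTerm I C F ⊕ (C × FTerm I C F)

/-- The LTL formula obtained from a TSL(T) formula by treating predicate and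
update terms as atomic propositions. -/
def TSL.toLTL : TSL I C F → LTL (AP I C F)
  | .pred τ => .atom (.inl τ)
  | .upd c τ => .atom (.inr (c, τ))
  | .not φ => .not φ.toLTL
  | .and φ ψ => .and φ.toLTL ψ.toLTL
  | .next φ => .next φ.toLTL
  | .untl φ ψ => .untl φ.toLTL ψ.toLTL

/-- `SeqW T init ζ ρ υ t` is the set of predicate terms of `ρ` and update terms of `υ`
that hold at time `t` of the computation `ζ`. -/
def SeqW (T : Thy V F) (init : Assign V I C) (ζ : ℕ → Assign V I C)
    (ρ : Set (FTerm I C F)) (υ : Set (C × FTerm I C F)) : ℕ → Set (AP I C F) :=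
  fun t => {a | Sum.elim
    (fun τ => τ ∈ ρ ∧ TSL.sat T init ζ (.pred τ) t)
    (fun u => u ∈ υ ∧ TSL.sat T init ζ (.upd u.1 u.2) t) a}

/-! ### Program statements, matching, feasibility -/

/-- Basic program statements. -/
inductive Stmt0 (I C F : Type) : Type where
  | assert : FTerm I C F → Stmt0 I C F
  | assign : C → FTerm I C F → Stmt0 I C F
  | havoc : C → Stmt0 I C F

/-- Program statements: nonempty finite sequences of basic statements. -/
abbrev Stmt (I C F : Type) := {l : List (Stmt0 I C F) // l ≠ []}

/-- A computation matches a trace of basic statements at time `t`. -/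
def matchesAt (T : Thy V F) (init : Assign V I C) (ζ : ℕ → Assign V I C)
    (σ : ℕ → Stmt0 I C F) (t : ℕ) : Prop :=
  match σ t with
  | .assert τ => τ.eval T (prevA init ζ t) = T.vtrue ∧
      ∀ c : C, ζ t (.inr c) = prevA init ζ t (.inr c)
  | .assign c τ => ζ t (.inr c) = τ.eval T (prevA init ζ t) ∧
      ∀ c', c' ≠ c → ζ t (.inr c') = prevA init ζ t (.inr c')
  | .havoc c => ∀ c', c' ≠ c → ζ t (.inr c') = prevA init ζ t (.inr c')

/-- A computation matches a trace of basic statements. -/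
def Matches (T : Thy V F) (init : Assign V I C) (ζ : ℕ → Assign V I C)
    (σ : ℕ → Stmt0 I C F) : Prop :=
  ∀ t, matchesAt T init ζ σ t

/-- Position (index of the statement, offset inside it) of the `j`-th basic statement
in the flattening of a trace of composed statements. -/
def fpos (σ : ℕ → Stmt I C F) : ℕ → ℕ × ℕ
  | 0 => (0, 0)
  | j + 1 =>
    let p := fpos σ j
    if p.2 + 1 < ((σ p.1).1).length then (p.1, p.2 + 1) else (p.1 + 1, 0)

/-- The flattening of a trace of composed statements into basic statements. -/
def flatten (σ : ℕ → Stmt I C F) (j : ℕ) : Stmt0 I C F :=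
  ((σ (fpos σ j).1).1).getD (fpos σ j).2 (((σ (fpos σ j).1).1).head (σ (fpos σ j).1).2)

/-- A computation matches a trace of composed statements (via its flattening). -/
def MatchesC (T : Thy V F) (init : Assign V I C) (ζ : ℕ → Assign V I C)
    (σ : ℕ → Stmt I C F) : Prop :=
  Matches T init ζ (flatten σ)

/-- A trace of composed statements is feasible if some computation matches it. -/
def Feasible (T : Thy V F) (init : Assign V I C) (σ : ℕ → Stmt I C F) : Prop :=
  ∃ ζ, MatchesC T init ζ σ

/-- A trace of basic statements is feasible if some computation matches it. -/
def Feasible0 (T : Thy V F) (init : Assign V I C) (σ : ℕ → Stmt0 I C F) : Prop :=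
  ∃ ζ, Matches T init ζ σ

/-! ### Büchi automata -/

/-- A Büchi automaton. -/
structure Buchi (A : Type) (Q : Type) where
  q0 : Q
  δ : Q → A → Q → Prop
  Acc : Set Q

/-- A run of a Büchi automaton on a word. -/
def Buchi.IsRun {A Q : Type} (B : Buchi A Q) (σ : ℕ → A) (r : ℕ → Q) : Prop :=
  r 0 = B.q0 ∧ ∀ t, B.δ (r t) (σ t) (r (t + 1))

/-- Büchi acceptance: some run visits accepting states infinitely often. -/
def Buchi.Accepts {A Q : Type} (B : Buchi A Q) (σ : ℕ → A) : Prop :=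
  ∃ r, B.IsRun σ r ∧ ∀ n, ∃ m, n ≤ m ∧ r m ∈ B.Acc

/-- A program automaton over basic statements satisfies a TSL(T) formula if every
computation matching an accepted trace satisfies the formula. -/
def SatisfiesTSL {Qp : Type} (T : Thy V F) (init : Assign V I C)
    (P : Buchi (Stmt0 I C F) Qp) (φ : TSL I C F) : Prop :=
  ∀ σ, P.Accepts σ → ∀ ζ, Matches T init ζ σ → φ.sat T init ζ 0

/-! ### The combine construction and the Büchi program product -/

/-- Extended cell set: original cells, inputs-as-cells, and fresh `tmp` cells. -/
abbrev CStar (I C : Type) := (C ⊕ I) ⊕ ℕ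

/-- Embedding of terms over inputs/cells into terms over the extended cell set. -/
def FTerm.embed : FTerm I C F → FTerm Empty (CStar I C) F
  | .inp i => .cell (.inl (.inr i))
  | .cell c => .cell (.inl (.inl c))
  | .app f ts => .app f (ts.attach.map fun t => t.1.embed)
decreasing_by
  have := List.sizeOf_lt_of_mem t.2
  simp only [FTerm.app.sizeOf_spec]
  omega

/-- Embedding of basic statements into statements over the extended cell set. -/
def Stmt0.embed : Stmt0 I C F → Stmt0 Empty (CStar I C) F
  | .assert τ => .assert τ.embed
  | .assign c τ => .assign (.inl (.inl c)) τ.embed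
  | .havoc c => .havoc (.inl (.inl c))

/-- Conjunction of a list of terms (via the theory's conjunction symbol). -/
def conjTerm (T : Thy V F) (O : Ops V F T) :
    List (FTerm Empty (CStar I C) F) → FTerm Empty (CStar I C) F
  | [] => .app O.ftrue []
  | τ :: ts => .app O.fand [τ, conjTerm T O ts]

/-- The `combine` construction: `save_values; s; new_inputs; check_preds_l; check_updates_l`. -/
noncomputable def combine (T : Thy V F) (O : Ops V F T) (ρ : List (FTerm I C F))
    (υ : List (C × FTerm I C F)) (inps : List I)
    (s : List (Stmt0 I C F)) (l : Set (AP I C F)) : Stmt Empty (CStar I C) F :=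
  ⟨(υ.mapIdx fun j u => Stmt0.assign (Sum.inr j) u.2.embed)
    ++ s.map Stmt0.embed
    ++ (inps.map fun i => Stmt0.havoc (Sum.inl (Sum.inr i)))
    ++ [Stmt0.assert (conjTerm T O
          (ρ.map fun τ => if Sum.inl τ ∈ l then τ.embed else .app O.fneg [τ.embed])),
        Stmt0.assert (conjTerm T O
          (υ.mapIdx fun j u =>
            let eqt : FTerm Empty (CStar I C) F :=
              .app O.feq [.cell (Sum.inl (Sum.inl u.1)), .cell (Sum.inr j)]
            if Sum.inr u ∈ l then eqt else .app O.fneg [eqt]))],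
    by simp⟩

/-- Lifting an automaton over basic statements to an automaton over (composed) statements. -/
def liftB {Qp : Type} (P : Buchi (Stmt0 I C F) Qp) : Buchi (Stmt I C F) Qp where
  q0 := P.q0
  δ := fun q w q' => ∃ s, P.δ q s q' ∧ w = ⟨[s], by simp⟩
  Acc := P.Acc

/-- The combined product `P ⊗ A` of a program automaton and a Büchi automaton over
sets of predicate/update terms. -/
noncomputable def product {Qp Qa : Type} (T : Thy V F) (O : Ops V F T)
    (P : Buchi (Stmt I C F) Qp) (A : Buchi (Set (AP I C F)) Qa)
    (ρ : List (FTerm I C F)) (υ : List (C × FTerm I C F)) (inps : List I) :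
    Buchi (Stmt Empty (CStar I C) F) (Qp × Qa) where
  q0 := (P.q0, A.q0)
  δ := fun x w y => ∃ s l, P.δ x.1 s y.1 ∧ A.δ x.2 l y.2 ∧ w = combine T O ρ υ inps s.1 l
  Acc := {x | x.2 ∈ A.Acc}

/-! ### HyperTSL(T) -/

/-- HyperTSL(T) formulas: a quantifier prefix over trace variables, followed by a
quantifier-free formula over trace-indexed inputs and cells. -/
inductive HyperTSL (I C F Pi : Type) : Type where
  | qf : TSL (I × Pi) (C × Pi) F → HyperTSL I C F Pi
  | all : Pi → HyperTSL I C F Pi → HyperTSL I C F Pi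
  | ex : Pi → HyperTSL I C F Pi → HyperTSL I C F Pi

/-- Extension `ζ̂[π, ζ]` of a hyper-computation by a computation for trace variable `π`. -/
noncomputable def extendH (ζh : ℕ → Assign V (I × Pi) (C × Pi)) (π : Pi)
    (ζ : ℕ → Assign V I C) : ℕ → Assign V (I × Pi) (C × Pi) :=
  fun t x =>
    match x with
    | .inl (i, π') => if π' = π then ζ t (.inl i) else ζh t (.inl (i, π'))
    | .inr (c, π') => if π' = π then ζ t (.inr c) else ζh t (.inr (c, π'))

/-- Satisfaction of a HyperTSL(T) formula. -/
noncomputable def HyperTSL.sat (T : Thy V F) (init : Assign V (I × Pi) (C × Pi))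
    (Z : Set (ℕ → Assign V I C)) :
    HyperTSL I C F Pi → (ℕ → Assign V (I × Pi) (C × Pi)) → ℕ → Prop
  | .qf ψ, ζh, t => ψ.sat T init ζh t
  | .all π φ, ζh, t => ∀ ζ ∈ Z, φ.sat T init Z (extendH ζh π ζ) t
  | .ex π φ, ζh, t => ∃ ζ ∈ Z, φ.sat T init Z (extendH ζh π ζ) t

/-- Lift an assignment to a hyper-assignment (every trace gets the same values). -/
def liftInit (init : Assign V I C) : Assign V (I × Pi) (C × Pi) :=
  fun x => match x with
  | .inl (i, _) => init (.inl i)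
  | .inr (c, _) => init (.inr c)

/-- The set of computations matching accepted traces of a program automaton. -/
def Zof {Qp : Type} (T : Thy V F) (init : Assign V I C)
    (P : Buchi (Stmt0 I C F) Qp) : Set (ℕ → Assign V I C) :=
  {ζ | ∃ σ, P.Accepts σ ∧ Matches T init ζ σ}

/-- A program automaton satisfies a HyperTSL(T) formula. -/
noncomputable def SatisfiesHyper {Qp : Type} (T : Thy V F) (init : Assign V I C)
    (P : Buchi (Stmt0 I C F) Qp) (φ : HyperTSL I C F Pi) : Prop :=
  φ.sat T (liftInit init) (Zof T init P) (fun _ => liftInit init) 0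

/-- Renaming of terms: cell `c` becomes `c_π`, input `i` becomes `i_π`. -/
def FTerm.rename (π : Pi) : FTerm I C F → FTerm (I × Pi) (C × Pi) F
  | .inp i => .inp (i, π)
  | .cell c => .cell (c, π)
  | .app f ts => .app f (ts.attach.map fun t => t.1.rename π)
decreasing_by
  have := List.sizeOf_lt_of_mem t.2
  simp only [FTerm.app.sizeOf_spec]
  omega

/-- Renaming of basic statements to a trace variable. -/
def Stmt0.rename (π : Pi) : Stmt0 I C F → Stmt0 (I × Pi) (C × Pi) F
  | .assert τ => .assert (τ.rename π)
  | .assign c τ => .assign (c, π) (τ.rename π)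
  | .havoc c => .havoc (c, π)

/-- The `n`-fold self-composition of a program automaton. -/
def selfComp {Qp : Type} (P : Buchi (Stmt0 I C F) Qp) (n : ℕ) :
    Buchi (Stmt (I × Fin n) (C × Fin n) F) (Fin n → Qp) where
  q0 := fun _ => P.q0
  δ := fun q w q' => ∃ ss : Fin n → Stmt0 I C F,
        (∀ j, P.δ (q j) (ss j) (q' j)) ∧
        w.1 = (List.finRange n).map fun j => (ss j).rename j
  Acc := Set.univ

/-- The `m`-fold self-composition, using the first `m` of `n` trace variables. -/
def selfCompInto {Qp : Type} (P : Buchi (Stmt0 I C F) Qp) (m n : ℕ) (h : m ≤ n) :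
    Buchi (Stmt (I × Fin n) (C × Fin n) F) (Fin m → Qp) where
  q0 := fun _ => P.q0
  δ := fun q w q' => ∃ ss : Fin m → Stmt0 I C F,
        (∀ j, P.δ (q j) (ss j) (q' j)) ∧
        w.1 = (List.finRange m).map fun j => (ss j).rename (Fin.castLE h j)
  Acc := Set.univ

end TSLMC

/-! ### k-feasibility and the automaton `P_k` -/

namespace TSLMC
open scoped Classical
variable {V I C F Pi : Type}

/-- The statement `assert(true)`. -/
def trueStmt (T : Thy V F) (O : Ops V F T) : Stmt I C F :=
  ⟨[.assert (.app O.ftrue [])], by simp⟩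

/-- Extend a finite window of statements by `assert(true)^ω`. -/
def extendTrue (T : Thy V F) (O : Ops V F T) (ss : List (Stmt I C F)) : ℕ → Stmt I C F :=
  fun t => if h : t < ss.length then ss.get ⟨t, h⟩ else trueStmt T O

/-- A finite window of statements is feasible if, followed by `assert(true)^ω`, it is
feasible for some initial assignment. -/
def WinFeasible (T : Thy V F) (O : Ops V F T) (ss : List (Stmt I C F)) : Prop :=
  ∃ init : Assign V I C, Feasible T init (extendTrue T O ss)

/-- The window `σ_j … σ_{j+k-1}` of a trace. -/
def window (σ : ℕ → α) (j k : ℕ) : List α :=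
  (List.range k).map fun i => σ (j + i)

/-- A trace is `k`-feasible if no window of `k` consecutive statements is infeasible
for all initial assignments. -/
def KFeasible (T : Thy V F) (O : Ops V F T) (k : ℕ) (σ : ℕ → Stmt I C F) : Prop :=
  ∀ j, WinFeasible T O (window σ j k)

/-- Chains of transitions of an automaton. -/
def chain {S Qp : Type} (P : Buchi S Qp) : Qp → List (S × Qp) → Prop
  | _, [] => True
  | q, (s, q') :: rest => P.δ q s q' ∧ chain P q' rest

/-- The last state of an alternating state/statement sequence. -/
def lastQ {S Qp : Type} (st : Qp × List (S × Qp)) : Qp :=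
  (st.2.getLast?).elim st.1 Prod.snd

/-- The statements of an alternating state/statement sequence. -/
def stmts {S Qp : Type} (st : Qp × List (S × Qp)) : List S :=
  st.2.map Prod.fst

/-- Valid states of `P_k`: chains of transitions of `P` of length `k-1`, or shorter
ones starting at the initial state. -/
def ValidSt {S Qp : Type} (P : Buchi S Qp) (k : ℕ) (st : Qp × List (S × Qp)) : Prop :=
  chain P st.1 st.2 ∧ (st.2.length = k - 1 ∨ (st.2.length < k - 1 ∧ st.1 = P.q0))

/-- Extend an alternating sequence by a transition, dropping the first entry if the
window is full. -/
def push {S Qp : Type} (k : ℕ) (st : Qp × List (S × Qp)) (s : S) (q' : Qp) :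
    Qp × List (S × Qp) :=
  let l' := st.2 ++ [(s, q')]
  if k ≤ l'.length then
    match l' with
    | [] => (st.1, [])
    | e :: rest => (e.2, rest)
  else (st.1, l')

/-- The automaton `P_k`: `P` without `k`-infeasibility. -/
def Pk {Qp : Type} (T : Thy V F) (O : Ops V F T) (P : Buchi (Stmt I C F) Qp) (k : ℕ) :
    Buchi (Stmt I C F) (Qp × List (Stmt I C F × Qp)) where
  q0 := (P.q0, [])
  δ := fun st s st' => ValidSt P k st ∧ ValidSt P k st' ∧
        ∃ q', P.δ (lastQ st) s q' ∧ WinFeasible T O (stmts st ++ [s]) ∧ st' = push k st s q'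
  Acc := {st | lastQ st ∈ P.Acc}

/-! ### Infeasible accepting cycles and their removal -/

/-- The trace `(s₁ … s_n)^ω` of a cycle. -/
def cycTrace (T : Thy V F) (O : Ops V F T) {Qp : Type}
    (ϱ : List (Qp × Stmt I C F × Qp)) : ℕ → Stmt I C F :=
  fun t => ((ϱ[t % ϱ.length]?).map fun e => e.2.1).getD (trueStmt T O)

/-- `ϱ` is a cycle of transitions of `B`. -/
def IsCycle {S Qp : Type} (B : Buchi S Qp) (ϱ : List (Qp × S × Qp)) : Prop :=
  ϱ ≠ [] ∧ (∀ e ∈ ϱ, B.δ e.1 e.2.1 e.2.2) ∧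
  (∀ i, (h : i + 1 < ϱ.length) →
    (ϱ.get ⟨i + 1, h⟩).1 = (ϱ.get ⟨i, Nat.lt_of_succ_lt h⟩).2.2) ∧
  ∀ h : ϱ ≠ [], (ϱ.getLast h).2.2 = (ϱ.head h).1

/-- An infeasible accepting cycle. -/
def InfAccCycle {Qp : Type} (T : Thy V F) (O : Ops V F T)
    (B : Buchi (Stmt I C F) Qp) (ϱ : List (Qp × Stmt I C F × Qp)) : Prop :=
  IsCycle B ϱ ∧ (∃ e ∈ ϱ, e.1 ∈ B.Acc) ∧
  ∀ init : Assign V I C, ¬ Feasible T init (cycTrace T O ϱ)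

/-- A trace ends with the infinite repetition of the statements of the cycle `ϱ`. -/
def EndsWithCyc {Qp : Type} (T : Thy V F) (O : Ops V F T)
    (σ : ℕ → Stmt I C F) (ϱ : List (Qp × Stmt I C F × Qp)) : Prop :=
  ∃ N, ∀ j, σ (N + j) = cycTrace T O ϱ j

/-- The automaton `A_ϱ`, accepting exactly the traces ending with `ϱ^ω`. -/
def cycAut {Qp : Type} (ϱ : List (Qp × Stmt I C F × Qp)) :
    Buchi (Stmt I C F) (Option (Fin ϱ.length)) where
  q0 := none
  δ := fun st s st' =>
    match st with
    | none => st' = none ∨ ∃ h : ϱ ≠ [],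
        s = (ϱ.head h).2.1 ∧
        st' = some ⟨1 % ϱ.length, Nat.mod_lt _ (List.length_pos_iff.mpr h)⟩
    | some i => s = (ϱ.get i).2.1 ∧
        st' = some ⟨((i : ℕ) + 1) % ϱ.length,
          Nat.mod_lt _ (Nat.lt_of_le_of_lt (Nat.zero_le _) i.isLt)⟩
  Acc := {st | st ≠ none}

/-- A Büchi automaton bundled with its state type. -/
structure BAut (A : Type) : Type 1 where
  Q : Type
  B : Buchi A Q

/-- One removal step: remove (the languages of the automata `A_ϱ` for) a set of
infeasible accepting cycles from an automaton. -/
def RemStep (T : Thy V F) (O : Ops V F T) (x y : BAut (Stmt I C F)) : Prop :=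
  ∃ Cset : Set (List (x.Q × Stmt I C F × x.Q)),
    (∀ ϱ ∈ Cset, InfAccCycle T O x.B ϱ) ∧
    ∀ σ, y.B.Accepts σ ↔ (x.B.Accepts σ ∧ ∀ ϱ ∈ Cset, ¬ EndsWithCyc T O σ ϱ)

/-- `k'` iterations of removing infeasible accepting cycles. -/
def RemChain (T : Thy V F) (O : Ops V F T) :
    ℕ → BAut (Stmt I C F) → BAut (Stmt I C F) → Prop
  | 0, x, y => y = x
  | k' + 1, x, y => ∃ z, RemChain T O k' x z ∧ RemStep T O z y

/-- The universal projection of (a refinement of) the combined product: keep the first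
`m` of the `n` statements of each `combine`-labelled transition. -/
noncomputable def projU {Q' : Type} (T : Thy V F) (O : Ops V F T) {m n : ℕ}
    (_hm : 0 < m) (hmn : m ≤ n)
    (ρ : List (FTerm (I × Fin n) (C × Fin n) F))
    (υ : List ((C × Fin n) × FTerm (I × Fin n) (C × Fin n) F))
    (inps : List (I × Fin n))
    (B : Buchi (Stmt Empty (CStar (I × Fin n) (C × Fin n)) F) Q') :
    Buchi (Stmt (I × Fin n) (C × Fin n) F) Q' where
  q0 := B.q0
  δ := fun q w q' => ∃ (ss : Fin n → Stmt0 (I × Fin n) (C × Fin n) F)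
        (l : Set (AP (I × Fin n) (C × Fin n) F)),
        B.δ q (combine T O ρ υ inps ((List.finRange n).map ss) l) q' ∧
        w.1 = (List.finRange m).map fun j => ss (Fin.castLE hmn j)
  Acc := B.Acc

/-- The formula `∀π₁ … ∀π_m ∃π_{m+1} … ∃π_n. ψ`. -/
def AEform (m n : ℕ) (ψ : TSL (I × Fin n) (C × Fin n) F) : HyperTSL I C F (Fin n) :=
  (List.finRange n).foldr
    (fun (j : Fin n) acc => if (j : ℕ) < m then HyperTSL.all j acc else HyperTSL.ex j acc)
    (.qf ψ)

end TSLMC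
/-! ### Reduced and adapted computations -/

namespace TSLMC
open scoped Classical
variable {V I C F Pi : Type}

/-- The index `ι(t) = B·(t+1) − 3` for blocks of length `B`. -/
def iotaIdx (B t : ℕ) : ℕ := B * (t + 1) - 3

/-- The reduced computation: the combined computation at the indices `ι(t)`,
restricted to the original inputs and cells. -/
def reduceC (B : ℕ) (ζ : ℕ → Assign V Empty (CStar I C)) : ℕ → Assign V I C :=
  fun t x => ζ (iotaIdx B t) (.inr (.inl x.swap))

/-- The reduced computation of trace variable `j`: the combined hyper-computation at
the indices `ι(t)`, restricted to the `j`-indexed inputs and cells, renamed back. -/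
def reduceTr {n : ℕ} (B : ℕ) (j : Fin n)
    (ζ : ℕ → Assign V Empty (CStar (I × Fin n) (C × Fin n))) : ℕ → Assign V I C :=
  fun t x => ζ (iotaIdx B t)
    (.inr (.inl (match x with | .inl i => .inr (i, j) | .inr c => .inl (c, j))))

/-- Assembling a hyper-computation from one computation per trace variable
(`∅[π₁, ζ₁]…[π_n, ζ_n]`). -/
def assembleH {n : ℕ} (red : Fin n → ℕ → Assign V I C) :
    ℕ → Assign V (I × Fin n) (C × Fin n) :=
  fun t x => match x with
  | .inl (i, j) => red j t (.inl i)
  | .inr (c, j) => red j t (.inr c)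

/-- The adapted computation `ζ̃` of a computation `ζ`. -/
noncomputable def adapt (T : Thy V F) (upds : List (C × FTerm I C F)) (inps : List I)
    (init : Assign V I C) (initC : Assign V Empty (CStar I C))
    (ζ : ℕ → Assign V I C) : ℕ → Assign V Empty (CStar I C) := fun idx x =>
  let m := upds.length
  let k := inps.length
  let b := idx / (m + k + 3)
  let i := idx % (m + k + 3)
  let newTmp : ℕ → V := fun p =>
    ((upds[p]?).map fun u => u.2.eval T (prevA init ζ b)).getD (initC (.inr (.inr p)))
  let oldTmp : ℕ → V := fun p =>
    match b with
    | 0 => initC (.inr (.inr p))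
    | b' + 1 => ((upds[p]?).map fun u => u.2.eval T (prevA init ζ b')).getD
        (initC (.inr (.inr p)))
  match x with
  | .inl e => e.elim
  | .inr (.inr p) => if i < m then (if p ≤ i then newTmp p else oldTmp p) else newTmp p
  | .inr (.inl (.inl c)) => if i < m then prevA init ζ b (.inr c) else ζ b (.inr c)
  | .inr (.inl (.inr ii)) =>
      if i < m + 1 then prevA init ζ b (.inl ii)
      else if i ≤ m + k then
        (if inps.idxOf ii < i - m then ζ b (.inl ii) else prevA init ζ b (.inl ii))
      else ζ b (.inl ii)

/-- The adapted hyper-computation of computations `ζ_{π₁}, …, ζ_{π_n}`. -/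
noncomputable def hadapt {n : ℕ} (T : Thy V F)
    (upds : List ((C × Fin n) × FTerm (I × Fin n) (C × Fin n) F))
    (inps : List (I × Fin n)) (init : Assign V I C)
    (initC : Assign V Empty (CStar (I × Fin n) (C × Fin n)))
    (ζs : Fin n → ℕ → Assign V I C) :
    ℕ → Assign V Empty (CStar (I × Fin n) (C × Fin n)) := fun idx x =>
  let m := upds.length
  let k := inps.length
  let b := idx / (m + n + k + 2)
  let i := idx % (m + n + k + 2)
  let ζ' : ℕ → Assign V (I × Fin n) (C × Fin n) := assembleH ζs
  let hinit : Assign V (I × Fin n) (C × Fin n) := liftInit init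
  let newTmp : ℕ → V := fun p =>
    ((upds[p]?).map fun u => u.2.eval T (prevA hinit ζ' b)).getD (initC (.inr (.inr p)))
  let oldTmp : ℕ → V := fun p =>
    match b with
    | 0 => initC (.inr (.inr p))
    | b' + 1 => ((upds[p]?).map fun u => u.2.eval T (prevA hinit ζ' b')).getD
        (initC (.inr (.inr p)))
  match x with
  | .inl e => e.elim
  | .inr (.inr p) => if i < m then (if p ≤ i then newTmp p else oldTmp p) else newTmp p
  | .inr (.inl (.inl cj)) =>
      if i < m then prevA hinit ζ' b (.inr cj)
      else if i < m + n then
        (if (cj.2 : ℕ) < i - m + 1 then ζs cj.2 b (.inr cj.1)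
         else prevA hinit ζ' b (.inr cj))
      else ζ' b (.inr cj)
  | .inr (.inl (.inr ij)) =>
      if i < m + n then prevA hinit ζ' b (.inl ij)
      else if i < m + n + k then
        (if inps.idxOf ij < i - (m + n) + 1 then ζ' b (.inl ij)
         else prevA hinit ζ' b (.inl ij))
      else ζ' b (.inl ij)

/-- The composed trace `σ_t = ((σ_{π₁})_{π₁})_t; … ; ((σ_{π_n})_{π_n})_t`. -/
def composedTrace {n : ℕ} (σs : Fin n → ℕ → Stmt0 I C F) (t : ℕ) :
    List (Stmt0 (I × Fin n) (C × Fin n) F) :=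
  (List.finRange n).map fun j => (σs j t).rename j

/-- The composed trace, as a trace of (nonempty) program statements. -/
def composedStmt {n : ℕ} (hn : 0 < n) (σs : Fin n → ℕ → Stmt0 I C F) (t : ℕ) :
    Stmt (I × Fin n) (C × Fin n) F :=
  ⟨composedTrace σs t, by
    intro h
    have := congrArg List.length h
    simp [composedTrace] at this
    omega⟩

end TSLMC

namespace TSLMC
open scoped Classical

section Aux
variable {V I C F : Type}

private theorem FTerm.strongInd {motive : FTerm I C F → Prop}
    (hi : ∀ i, motive (.inp i)) (hc : ∀ c, motive (.cell c))
    (ha : ∀ f ts, (∀ t ∈ ts, motive t) → motive (.app f ts)) : ∀ τ, motive τ := by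
  have key : ∀ n (τ : FTerm I C F), sizeOf τ ≤ n → motive τ := by
    intro n
    induction n with
    | zero => intro τ h; cases τ <;> simp at h
    | succ n ih =>
      intro τ h
      match τ with
      | .inp i => exact hi i
      | .cell c => exact hc c
      | .app f ts =>
        refine ha f ts fun t ht => ih t ?_
        have := List.sizeOf_lt_of_mem ht
        simp only [FTerm.app.sizeOf_spec] at h
        omega
  exact fun τ => key (sizeOf τ) τ le_rfl

private theorem eval_app (T : Thy V F) (a : Assign V I C) (f : F) (ts : List (FTerm I C F)) :
    (FTerm.app f ts).eval T a = T.ε f (ts.map fun t => t.eval T a) := by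
  rw [FTerm.eval]
  congr 1
  exact List.attach_map_val (l := ts) (f := fun t => FTerm.eval T a t)

private theorem embed_app (f : F) (ts : List (FTerm I C F)) :
    (FTerm.app f ts).embed = FTerm.app f (ts.map FTerm.embed) := by
  rw [FTerm.embed]
  congr 1
  exact List.attach_map_val (l := ts) (f := FTerm.embed)

/-- Restriction of an extended assignment to original inputs and cells. -/
private def pull (a : Assign V Empty (CStar I C)) : Assign V I C :=
  fun x => a (.inr (.inl x.swap))

private theorem embed_eval (T : Thy V F) (a : Assign V Empty (CStar I C)) :
    ∀ τ : FTerm I C F, τ.embed.eval T a = τ.eval T (pull a) := by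
  refine FTerm.strongInd (fun i => ?_) (fun c => ?_) (fun f ts ih => ?_)
  · simp [FTerm.embed, FTerm.eval, pull]
  · simp [FTerm.embed, FTerm.eval, pull]
  · rw [embed_app, eval_app, eval_app, List.map_map]
    congr 1
    exact List.map_congr_left fun t ht => ih t ht

private theorem neg_true (T : Thy V F) (O : Ops V F T) (a : Assign V Empty (CStar I C))
    (τ : FTerm Empty (CStar I C) F) :
    (FTerm.app O.fneg [τ]).eval T a = T.vtrue ↔ ¬ τ.eval T a = T.vtrue := by
  rw [eval_app]
  simp only [List.map_cons, List.map_nil]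
  rw [O.hneg]
  split_ifs with h
  · simp [h, O.tne.symm]
  · simp [h]

private theorem conjTerm_true (T : Thy V F) (O : Ops V F T) (a : Assign V Empty (CStar I C)) :
    ∀ ts : List (FTerm Empty (CStar I C) F),
      ((conjTerm T O ts).eval T a = T.vtrue ↔ ∀ τ ∈ ts, τ.eval T a = T.vtrue) := by
  intro ts
  induction ts with
  | nil => simp [conjTerm, eval_app, O.htrue]
  | cons τ ts ih =>
    rw [conjTerm, eval_app]
    simp only [List.map_cons, List.map_nil]
    rw [O.hand]
    split_ifs with h
    · simp only [List.mem_cons, true_iff]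
      intro τ' hτ'
      rcases hτ' with rfl | hτ'
      · exact h.1
      · exact ih.mp h.2 τ' hτ'
    · simp only [List.mem_cons, O.tne.symm, false_iff]
      intro hall
      exact h ⟨hall τ (Or.inl rfl), ih.mpr fun τ' h' => hall τ' (Or.inr h')⟩

private theorem constOn {α : Type*} (g : ℕ → α) (lo : ℕ) :
    ∀ hi, lo ≤ hi → (∀ j, lo ≤ j → j < hi → g (j + 1) = g j) → g hi = g lo := by
  intro hi h
  induction hi, h using Nat.le_induction with
  | base => intro _; rfl
  | succ n hn ih =>
    intro hs
    rw [hs n hn (Nat.lt_succ_self n), ih fun j h1 h2 => hs j h1 (by omega)]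

private theorem fpos_const (σ : ℕ → Stmt I C F) (B : ℕ) (hB : 0 < B)
    (hlen : ∀ t, ((σ t).1).length = B) : ∀ j, fpos σ j = (j / B, j % B) := by
  intro j
  induction j with
  | zero => simp [fpos, Nat.div_eq_of_lt hB, Nat.mod_eq_of_lt hB]
  | succ j ih =>
    rw [fpos, ih]
    simp only [hlen]
    have h1 := Nat.div_add_mod j B
    have h2 := Nat.mod_lt j hB
    split_ifs with h
    · have e1 : j + 1 = B * (j / B) + (j % B + 1) := by omega
      have e2 : (j + 1) / B = j / B := by
        rw [e1, Nat.mul_add_div hB, Nat.div_eq_of_lt h]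
        omega
      have e3 : (j + 1) % B = j % B + 1 := by
        rw [e1, Nat.mul_add_mod, Nat.mod_eq_of_lt h]
      rw [e2, e3]
    · have hEq : j % B + 1 = B := by omega
      have e1 : j + 1 = B * (j / B + 1) + 0 := by
        rw [Nat.mul_add]
        omega
      have e2 : (j + 1) / B = j / B + 1 := by
        rw [e1, Nat.mul_add_div hB]
        simp
      have e3 : (j + 1) % B = 0 := by
        rw [e1, Nat.mul_add_mod]
        exact Nat.zero_mod B
      rw [e2, e3]

private theorem flatten_const (σ : ℕ → Stmt I C F) (B : ℕ) (hB : 0 < B)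
    (hlen : ∀ t, ((σ t).1).length = B) (j : ℕ) :
    flatten σ j = ((σ (j / B)).1)[j % B]'(by rw [hlen]; exact Nat.mod_lt _ hB) := by
  have h := fpos_const σ B hB hlen j
  simp only [flatten, h]
  exact List.getD_eq_getElem _ _ _

private theorem tsl_iff_ltl (T : Thy V F) (init : Assign V I C) (ζ : ℕ → Assign V I C)
    (w : ℕ → Set (AP I C F)) :
    ∀ ψ : TSL I C F,
      (∀ t (τ : FTerm I C F), τ ∈ ψ.predList →
        (Sum.inl τ ∈ w t ↔ TSL.sat T init ζ (.pred τ) t)) →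
      (∀ t (u : C × FTerm I C F), u ∈ ψ.updList →
        (Sum.inr u ∈ w t ↔ TSL.sat T init ζ (.upd u.1 u.2) t)) →
      ∀ t, LTL.sat w ψ.toLTL t ↔ ψ.sat T init ζ t := by
  intro ψ
  induction ψ with
  | pred τ =>
    intro hp _ t
    simpa [TSL.toLTL, LTL.sat] using hp t τ (by simp [TSL.predList])
  | upd c τ =>
    intro _ hu t
    simpa [TSL.toLTL, LTL.sat] using hu t (c, τ) (by simp [TSL.updList])
  | not ψ ih =>
    intro hp hu t
    simp only [TSL.toLTL, LTL.sat, TSL.sat]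
    rw [ih hp hu t]
  | and ψ1 ψ2 ih1 ih2 =>
    intro hp hu t
    simp only [TSL.toLTL, LTL.sat, TSL.sat]
    rw [ih1 (fun t τ h => hp t τ (by simp [TSL.predList, h]))
          (fun t u h => hu t u (by simp [TSL.updList, h])) t,
        ih2 (fun t τ h => hp t τ (by simp [TSL.predList, h]))
          (fun t u h => hu t u (by simp [TSL.updList, h])) t]
  | next ψ ih =>
    intro hp hu t
    simp only [TSL.toLTL, LTL.sat, TSL.sat]
    rw [ih hp hu (t + 1)]
  | untl ψ1 ψ2 ih1 ih2 =>
    intro hp hu t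
    simp only [TSL.toLTL, LTL.sat, TSL.sat]
    have e1 := ih1 (fun t τ h => hp t τ (by simp [TSL.predList, h]))
          (fun t u h => hu t u (by simp [TSL.updList, h]))
    have e2 := ih2 (fun t τ h => hp t τ (by simp [TSL.predList, h]))
          (fun t u h => hu t u (by simp [TSL.updList, h]))
    constructor
    · rintro ⟨t', h1, h2, h3⟩
      exact ⟨t', h1, (e2 t').mp h2, fun t'' ha hb => (e1 t'').mp (h3 t'' ha hb)⟩
    · rintro ⟨t', h1, h2, h3⟩
      exact ⟨t', h1, (e2 t').mpr h2, fun t'' ha hb => (e1 t'').mpr (h3 t'' ha hb)⟩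

private theorem feq_true (T : Thy V F) (O : Ops V F T) (a : Assign V Empty (CStar I C))
    (t1 t2 : FTerm Empty (CStar I C) F) :
    (FTerm.app O.feq [t1, t2]).eval T a = T.vtrue ↔ t1.eval T a = t2.eval T a := by
  rw [eval_app]
  simp only [List.map_cons, List.map_nil]
  rw [O.heq]
  split_ifs with h
  · simp [h]
  · simp [h, O.tne.symm]

private theorem div_mod_block (B b i : ℕ) (hB : 0 < B) (hi : i < B) :
    (B * b + i) / B = b ∧ (B * b + i) % B = i := by
  rw [Nat.mul_add_div hB, Nat.div_eq_of_lt hi, Nat.mul_add_mod, Nat.mod_eq_of_lt hi]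
  simp

private theorem mod_window (B b lo hi j : ℕ) (hhi : hi < B) (h1 : B * b + lo < j)
    (h2 : j ≤ B * b + hi) : j % B = j - B * b ∧ lo < j - B * b ∧ j - B * b ≤ hi := by
  have hd : j = B * b + (j - B * b) := by omega
  have h3 : j % B = j - B * b := by
    conv_lhs => rw [hd]
    rw [Nat.mul_add_mod, Nat.mod_eq_of_lt (by omega)]
  exact ⟨h3, by omega, by omega⟩

private theorem mod_window2 (B b hi j : ℕ) (hhi : hi < B) (h1 : B * b ≤ j)
    (h2 : j ≤ B * b + hi) : j % B = j - B * b := by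
  conv_lhs => rw [show j = B * b + (j - B * b) by omega]
  rw [Nat.mul_add_mod, Nat.mod_eq_of_lt (by omega)]

private def redC (Bv off : ℕ) (ζC : ℕ → Assign V Empty (CStar I C)) : ℕ → Assign V I C :=
  fun t x => ζC (Bv * t + off) (.inr (.inl x.swap))

private theorem q_bounds (B t j : ℕ) (hB : 0 < B) (h1 : B * t ≤ j) (h2 : j < B * (t + 2)) :
    j / B = t ∨ j / B = t + 1 := by
  have h0 := Nat.div_add_mod j B
  have hr := Nat.mod_lt j hB
  have hq1 : t ≤ j / B := by
    by_contra hc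
    push_neg at hc
    have : B * (j / B + 1) ≤ B * t := Nat.mul_le_mul_left B (by omega)
    rw [Nat.mul_succ] at this
    omega
  have hq2 : j / B ≤ t + 1 := by
    by_contra hc
    push_neg at hc
    have : B * (t + 2) ≤ B * (j / B) := Nat.mul_le_mul_left B (by omega)
    omega
  omega

private theorem mod_ne_of_between (B m t j : ℕ) (hm : m < B) (h1 : B * t + m < j)
    (h2 : j < B * (t + 1) + m) : j % B ≠ m := by
  intro hEq
  have h0 := Nat.div_add_mod j B
  have hq : j / B = t ∨ j / B = t + 1 := by
    refine q_bounds B t j (by omega) (by omega) ?_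
    have e1 : B * (t + 2) = B * (t + 1) + B := Nat.mul_succ B (t + 1)
    have e2 : B * (t + 1) = B * t + B := Nat.mul_succ B t
    omega
  have hs : B * (t + 1) = B * t + B := Nat.mul_succ B t
  rcases hq with hq | hq <;> rw [hq] at h0 <;> omega

private theorem inp_region (B m k t j : ℕ) (hB : B = m + k + 3) (h1 : B * t + m + k < j)
    (h2 : j ≤ B * (t + 1) + m) : j % B ≤ m ∨ m + k < j % B := by
  have h0 := Nat.div_add_mod j B
  have hs : B * (t + 1) = B * t + B := Nat.mul_succ B t
  have hq : j / B = t ∨ j / B = t + 1 := by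
    refine q_bounds B t j (by omega) (by omega) ?_
    have e1 : B * (t + 2) = B * (t + 1) + B := Nat.mul_succ B (t + 1)
    omega
  rcases hq with hq | hq <;> rw [hq] at h0 <;> omega

section Combine
variable (T : Thy V F) (O : Ops V F T) (ρL : List (FTerm I C F))
  (υL : List (C × FTerm I C F)) (inps : List I) (s0 : Stmt0 I C F) (l : Set (AP I C F))

private theorem combine_len :
    ((combine T O ρL υL inps [s0] l).1).length = υL.length + inps.length + 3 := by
  simp [combine]
  omega

private theorem combine_get_save (j : ℕ) (hj : j < υL.length) :
    ((combine T O ρL υL inps [s0] l).1)[j]'(by rw [combine_len]; omega) =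
      Stmt0.assign (Sum.inr j) (υL[j]).2.embed := by
  simp only [combine]
  rw [List.getElem_append_left (by simp only [List.length_append, List.length_mapIdx, List.length_map, List.length_cons, List.length_nil]; omega),
      List.getElem_append_left (by simp only [List.length_append, List.length_mapIdx, List.length_map, List.length_cons, List.length_nil]; omega),
      List.getElem_append_left (by simp only [List.length_append, List.length_mapIdx, List.length_map, List.length_cons, List.length_nil]; omega),
      List.getElem_mapIdx]

private theorem combine_get_stmt :
    ((combine T O ρL υL inps [s0] l).1)[υL.length]'(by rw [combine_len]; omega) =
      s0.embed := by
  simp only [combine]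
  rw [List.getElem_append_left (by simp only [List.length_append, List.length_mapIdx, List.length_map, List.length_cons, List.length_nil]; omega),
      List.getElem_append_left (by simp only [List.length_append, List.length_mapIdx, List.length_map, List.length_cons, List.length_nil]; omega),
      List.getElem_append_right (by simp) (h₂ := by simp)]
  simp

private theorem combine_get_havoc (d : ℕ) (hd : d < inps.length) :
    ((combine T O ρL υL inps [s0] l).1)[υL.length + 1 + d]'(by rw [combine_len]; omega) =
      Stmt0.havoc (Sum.inl (Sum.inr (inps[d]))) := by
  simp only [combine]
  rw [List.getElem_append_left (by simp only [List.length_append, List.length_mapIdx, List.length_map, List.length_cons, List.length_nil]; omega),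
      List.getElem_append_right (by simp only [List.length_append, List.length_mapIdx, List.length_map, List.length_cons, List.length_nil]; omega) (h₂ := by simp; omega)]
  simp only [List.length_append, List.length_mapIdx, List.length_map, List.length_cons,
    List.length_nil]
  have hidx : υL.length + 1 + d - (υL.length + (0 + 1)) = d := by omega
  simp only [hidx]
  rw [List.getElem_map]

private theorem combine_get_aP :
    ((combine T O ρL υL inps [s0] l).1)[υL.length + inps.length + 1]'
        (by rw [combine_len]; omega) =
      Stmt0.assert (conjTerm T O
        (ρL.map fun τ => if Sum.inl τ ∈ l then τ.embed else .app O.fneg [τ.embed])) := by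
  simp only [combine]
  rw [List.getElem_append_right (by simp only [List.length_append, List.length_mapIdx, List.length_map, List.length_cons, List.length_nil]; omega) (h₂ := by simp; omega)]
  simp only [List.length_append, List.length_mapIdx, List.length_map, List.length_cons,
    List.length_nil]
  have : υL.length + inps.length + 1 - (υL.length + (0 + 1) + inps.length) = 0 := by omega
  simp [this]

private theorem combine_get_aU :
    ((combine T O ρL υL inps [s0] l).1)[υL.length + inps.length + 2]'
        (by rw [combine_len]; omega) =
      Stmt0.assert (conjTerm T O
        (υL.mapIdx fun j u =>
          let eqt : FTerm Empty (CStar I C) F :=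
            .app O.feq [.cell (Sum.inl (Sum.inl u.1)), .cell (Sum.inr j)]
          if Sum.inr u ∈ l then eqt else .app O.fneg [eqt])) := by
  simp only [combine]
  rw [List.getElem_append_right (by simp only [List.length_append, List.length_mapIdx, List.length_map, List.length_cons, List.length_nil]; omega) (h₂ := by simp; omega)]
  simp only [List.length_append, List.length_mapIdx, List.length_map, List.length_cons,
    List.length_nil]
  have : υL.length + inps.length + 2 - (υL.length + (0 + 1) + inps.length) = 1 := by omega
  simp [this]

end Combine

section Adapt

variable (T : Thy V F) (υL : List (C × FTerm I C F)) (inps : List I)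
  (init : Assign V I C) (initC : Assign V Empty (CStar I C)) (ζ : ℕ → Assign V I C)

/-- The value saved in `tmp p` during block `b`. -/
private def NT (b p : ℕ) : V :=
  ((υL[p]?).map fun u => u.2.eval T (prevA init ζ b)).getD (initC (.inr (.inr p)))

/-- The value of `tmp p` at the start of block `b`. -/
private def OT (b p : ℕ) : V :=
  match b with
  | 0 => initC (.inr (.inr p))
  | b' + 1 => NT T υL init initC ζ b' p

private theorem adapt_cell (idx : ℕ) (c : C) :
    adapt T υL inps init initC ζ idx (.inr (.inl (.inl c))) =
      if idx % (υL.length + inps.length + 3) < υL.length then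
        prevA init ζ (idx / (υL.length + inps.length + 3)) (.inr c)
      else ζ (idx / (υL.length + inps.length + 3)) (.inr c) := rfl

private theorem adapt_inp (idx : ℕ) (ii : I) :
    adapt T υL inps init initC ζ idx (.inr (.inl (.inr ii))) =
      (if idx % (υL.length + inps.length + 3) < υL.length + 1 then
        prevA init ζ (idx / (υL.length + inps.length + 3)) (.inl ii)
      else if idx % (υL.length + inps.length + 3) ≤ υL.length + inps.length then
        (if inps.idxOf ii < idx % (υL.length + inps.length + 3) - υL.length then
          ζ (idx / (υL.length + inps.length + 3)) (.inl ii)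
        else prevA init ζ (idx / (υL.length + inps.length + 3)) (.inl ii))
      else ζ (idx / (υL.length + inps.length + 3)) (.inl ii)) := rfl

private theorem adapt_tmp (idx : ℕ) (p : ℕ) :
    adapt T υL inps init initC ζ idx (.inr (.inr p)) =
      (if idx % (υL.length + inps.length + 3) < υL.length then
        (if p ≤ idx % (υL.length + inps.length + 3) then
          NT T υL init initC ζ (idx / (υL.length + inps.length + 3)) p
        else OT T υL init initC ζ (idx / (υL.length + inps.length + 3)) p)
      else NT T υL init initC ζ (idx / (υL.length + inps.length + 3)) p) := rfl

end Adapt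

private theorem succ_div_mod (B n : ℕ) (hB : 0 < B) :
    (n % B + 1 < B ∧ (n + 1) / B = n / B ∧ (n + 1) % B = n % B + 1) ∨
    (n % B + 1 = B ∧ (n + 1) / B = n / B + 1 ∧ (n + 1) % B = 0) := by
  have h0 := Nat.div_add_mod n B
  have hr := Nat.mod_lt n hB
  rcases lt_or_ge (n % B + 1) B with h | h
  · left
    have e : n + 1 = B * (n / B) + (n % B + 1) := by omega
    have h2 := div_mod_block B (n / B) (n % B + 1) hB h
    rw [← e] at h2
    exact ⟨h, h2.1, h2.2⟩
  · right
    have hEq : n % B + 1 = B := by omega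
    have e : n + 1 = B * (n / B + 1) + 0 := by rw [Nat.mul_add]; omega
    have h2 := div_mod_block B (n / B + 1) 0 hB hB
    rw [← e] at h2
    exact ⟨hEq, h2.1, h2.2⟩

section PAdapt

variable (T : Thy V F) (υL : List (C × FTerm I C F)) (inps : List I)
  (init : Assign V I C) (initC : Assign V Empty (CStar I C)) (ζ : ℕ → Assign V I C)

private theorem padapt_cell (hic : ∀ c : C, initC (.inr (.inl (.inl c))) = init (.inr c))
    (idx : ℕ) (c : C) :
    prevA initC (adapt T υL inps init initC ζ) idx (.inr (.inl (.inl c))) =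
      if idx % (υL.length + inps.length + 3) < υL.length + 1 then
        prevA init ζ (idx / (υL.length + inps.length + 3)) (.inr c)
      else ζ (idx / (υL.length + inps.length + 3)) (.inr c) := by
  cases idx with
  | zero =>
    have h1 : (0 : ℕ) % (υL.length + inps.length + 3) = 0 := Nat.zero_mod _
    have h2 : (0 : ℕ) / (υL.length + inps.length + 3) = 0 := Nat.zero_div _
    rw [h1, h2, if_pos (by omega)]
    exact hic c
  | succ n =>
    have hB : 0 < υL.length + inps.length + 3 := by omega
    show adapt T υL inps init initC ζ n (.inr (.inl (.inl c))) = _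
    rw [adapt_cell]
    rcases succ_div_mod _ n hB with ⟨h1, h2, h3⟩ | ⟨h1, h2, h3⟩ <;> simp only [Nat.succ_eq_add_one, h2, h3] <;>
      split_ifs <;> first | rfl | omega | exact (‹False›).elim

private theorem padapt_inp (hii : ∀ i : I, initC (.inr (.inl (.inr i))) = init (.inl i))
    (idx : ℕ) (ii : I) :
    prevA initC (adapt T υL inps init initC ζ) idx (.inr (.inl (.inr ii))) =
      (if idx % (υL.length + inps.length + 3) < υL.length + 2 then
        prevA init ζ (idx / (υL.length + inps.length + 3)) (.inl ii)
      else if idx % (υL.length + inps.length + 3) ≤ υL.length + inps.length + 1 then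
        (if inps.idxOf ii + υL.length + 1 < idx % (υL.length + inps.length + 3) then
          ζ (idx / (υL.length + inps.length + 3)) (.inl ii)
        else prevA init ζ (idx / (υL.length + inps.length + 3)) (.inl ii))
      else ζ (idx / (υL.length + inps.length + 3)) (.inl ii)) := by
  cases idx with
  | zero =>
    have h1 : (0 : ℕ) % (υL.length + inps.length + 3) = 0 := Nat.zero_mod _
    have h2 : (0 : ℕ) / (υL.length + inps.length + 3) = 0 := Nat.zero_div _
    rw [h1, h2, if_pos (by omega)]
    exact hii ii
  | succ n =>
    have hB : 0 < υL.length + inps.length + 3 := by omega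
    show adapt T υL inps init initC ζ n (.inr (.inl (.inr ii))) = _
    rw [adapt_inp]
    rcases succ_div_mod _ n hB with ⟨h1, h2, h3⟩ | ⟨h1, h2, h3⟩ <;> simp only [Nat.succ_eq_add_one, h2, h3] <;>
      split_ifs <;> first | rfl | omega | exact (‹False›).elim

private theorem padapt_tmp (idx : ℕ) (p : ℕ) :
    prevA initC (adapt T υL inps init initC ζ) idx (.inr (.inr p)) =
      (if idx % (υL.length + inps.length + 3) = 0 then
        OT T υL init initC ζ (idx / (υL.length + inps.length + 3)) p
      else if idx % (υL.length + inps.length + 3) ≤ υL.length then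
        (if p < idx % (υL.length + inps.length + 3) then
          NT T υL init initC ζ (idx / (υL.length + inps.length + 3)) p
        else OT T υL init initC ζ (idx / (υL.length + inps.length + 3)) p)
      else NT T υL init initC ζ (idx / (υL.length + inps.length + 3)) p) := by
  cases idx with
  | zero =>
    have h1 : (0 : ℕ) % (υL.length + inps.length + 3) = 0 := Nat.zero_mod _
    have h2 : (0 : ℕ) / (υL.length + inps.length + 3) = 0 := Nat.zero_div _
    rw [h1, h2, if_pos rfl]
    rfl
  | succ n =>
    have hB : 0 < υL.length + inps.length + 3 := by omega
    show adapt T υL inps init initC ζ n (.inr (.inr p)) = _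
    rw [adapt_tmp]
    rcases succ_div_mod _ n hB with ⟨h1, h2, h3⟩ | ⟨h1, h2, h3⟩ <;> simp only [Nat.succ_eq_add_one, h2, h3] <;>
      split_ifs <;> first | rfl | omega | exact (‹False›).elim

end PAdapt


section DirMp
variable {Qp Qa : Type}

private theorem dir_mp (T : Thy V F) (O : Ops V F T)
    (init : Assign V I C) (initC : Assign V Empty (CStar I C))
    (hic : ∀ c : C, initC (.inr (.inl (.inl c))) = init (.inr c))
    (hii : ∀ i : I, initC (.inr (.inl (.inr i))) = init (.inl i))
    (inps : List I)
    (P : Buchi (Stmt0 I C F) Qp) (hPAcc : P.Acc = Set.univ)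
    (φ : TSL I C F)
    (A : Buchi (Set (AP I C F)) Qa)
    (hA : ∀ w : ℕ → Set (AP I C F), A.Accepts w ↔ (LTL.not φ.toLTL).sat w 0)
    (hSat : SatisfiesTSL T init P φ) :
    ¬ ∃ w, (product T O (liftB P) A φ.predList φ.updList inps).Accepts w ∧
      Feasible T initC w := by
  rintro ⟨w, ⟨r, ⟨hr0, hrstep⟩, hrinf⟩, ζC, hmatch⟩
  have hstep : ∀ t, ∃ s0 l, P.δ (r t).1 s0 (r (t + 1)).1 ∧ A.δ (r t).2 l (r (t + 1)).2 ∧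
      w t = combine T O φ.predList φ.updList inps [s0] l := by
    intro t
    obtain ⟨s, l, h1, h2, h3⟩ := hrstep t
    obtain ⟨s0, h4, rfl⟩ := h1
    exact ⟨s0, l, h4, h2, h3⟩
  choose σ lab hPδ hAδ hw using hstep
  have hBpos : 0 < (φ.updList.length + inps.length + 3) := by omega
  have hlen : ∀ t, ((w t).1).length = (φ.updList.length + inps.length + 3) := by
    intro t
    rw [hw t]
    exact combine_len T O φ.predList φ.updList inps (σ t) (lab t)
  have hflat := flatten_const w (φ.updList.length + inps.length + 3) hBpos hlen
  -- element shapes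
  have hel_save : ∀ b j, (hj : j < φ.updList.length) → flatten w ((φ.updList.length + inps.length + 3) * b + j) =
      Stmt0.assign (Sum.inr j) ((φ.updList[j]'hj).2.embed) := by
    intro b j hj
    rw [hflat ((φ.updList.length + inps.length + 3) * b + j)]
    have hd := div_mod_block (φ.updList.length + inps.length + 3) b j hBpos (by omega)
    simp only [hd.1, hd.2, hw b]
    exact combine_get_save T O φ.predList φ.updList inps (σ b) (lab b) j hj
  have hel_stmt : ∀ b, flatten w ((φ.updList.length + inps.length + 3) * b + φ.updList.length) = (σ b).embed := by
    intro b
    rw [hflat ((φ.updList.length + inps.length + 3) * b + φ.updList.length)]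
    have hd := div_mod_block (φ.updList.length + inps.length + 3) b φ.updList.length hBpos (by omega)
    simp only [hd.1, hd.2, hw b]
    exact combine_get_stmt T O φ.predList φ.updList inps (σ b) (lab b)
  have hel_havoc : ∀ b d, (hd : d < inps.length) → flatten w ((φ.updList.length + inps.length + 3) * b + (φ.updList.length + 1 + d)) =
      Stmt0.havoc (Sum.inl (Sum.inr (inps[d]'hd))) := by
    intro b d hdk
    rw [hflat ((φ.updList.length + inps.length + 3) * b + (φ.updList.length + 1 + d))]
    have hd := div_mod_block (φ.updList.length + inps.length + 3) b (φ.updList.length + 1 + d) hBpos (by omega)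
    simp only [hd.1, hd.2, hw b]
    exact combine_get_havoc T O φ.predList φ.updList inps (σ b) (lab b) d hdk
  have hel_aP : ∀ b, flatten w ((φ.updList.length + inps.length + 3) * b + (φ.updList.length + inps.length + 1)) =
      Stmt0.assert (conjTerm T O (φ.predList.map fun τ =>
        if Sum.inl τ ∈ lab b then τ.embed else .app O.fneg [τ.embed])) := by
    intro b
    rw [hflat ((φ.updList.length + inps.length + 3) * b + (φ.updList.length + inps.length + 1))]
    have hd := div_mod_block (φ.updList.length + inps.length + 3) b (φ.updList.length + inps.length + 1) hBpos (by omega)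
    simp only [hd.1, hd.2, hw b]
    exact combine_get_aP T O φ.predList φ.updList inps (σ b) (lab b)
  have hel_aU : ∀ b, flatten w ((φ.updList.length + inps.length + 3) * b + (φ.updList.length + inps.length + 2)) =
      Stmt0.assert (conjTerm T O (φ.updList.mapIdx fun j u =>
        let eqt : FTerm Empty (CStar I C) F :=
          .app O.feq [.cell (Sum.inl (Sum.inl u.1)), .cell (Sum.inr j)]
        if Sum.inr u ∈ lab b then eqt else .app O.fneg [eqt])) := by
    intro b
    rw [hflat ((φ.updList.length + inps.length + 3) * b + (φ.updList.length + inps.length + 2))]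
    have hd := div_mod_block (φ.updList.length + inps.length + 3) b (φ.updList.length + inps.length + 2) hBpos (by omega)
    simp only [hd.1, hd.2, hw b]
    exact combine_get_aU T O φ.predList φ.updList inps (σ b) (lab b)
  -- a master case lemma for an index
  have hshape : ∀ x : ℕ,
      (∃ hlt : x % (φ.updList.length + inps.length + 3) < φ.updList.length,
        flatten w x = Stmt0.assign (Sum.inr (x % (φ.updList.length + inps.length + 3)))
        ((φ.updList[x % (φ.updList.length + inps.length + 3)]'hlt).2.embed)) ∨
      (x % (φ.updList.length + inps.length + 3) = φ.updList.length) ∨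
      (φ.updList.length < x % (φ.updList.length + inps.length + 3) ∧ x % (φ.updList.length + inps.length + 3) ≤ φ.updList.length + inps.length) ∨
      (x % (φ.updList.length + inps.length + 3) = φ.updList.length + inps.length + 1) ∨ (x % (φ.updList.length + inps.length + 3) = φ.updList.length + inps.length + 2) := by
    intro x
    have hmod := Nat.mod_lt x hBpos
    rcases lt_trichotomy (x % (φ.updList.length + inps.length + 3)) φ.updList.length with h | h | h
    · left
      refine ⟨h, ?_⟩
      have hx : x = (φ.updList.length + inps.length + 3) * (x / (φ.updList.length + inps.length + 3)) + (x % (φ.updList.length + inps.length + 3)) := by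
        have := Nat.div_add_mod x (φ.updList.length + inps.length + 3)
        omega
      conv_lhs => rw [hx]
      exact hel_save (x / (φ.updList.length + inps.length + 3)) (x % (φ.updList.length + inps.length + 3)) h
    · exact Or.inr (Or.inl h)
    · rcases lt_or_ge (x % (φ.updList.length + inps.length + 3)) (φ.updList.length + inps.length + 1) with h2 | h2
      · exact Or.inr (Or.inr (Or.inl ⟨h, by omega⟩))
      · rcases eq_or_lt_of_le h2 with h3 | h3
        · exact Or.inr (Or.inr (Or.inr (Or.inl h3.symm)))
        · exact Or.inr (Or.inr (Or.inr (Or.inr (by omega))))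
  -- preservation of cells
  have hstep_cell : ∀ x, x % (φ.updList.length + inps.length + 3) ≠ φ.updList.length → ∀ c : C,
      ζC x (.inr (.inl (.inl c))) = prevA initC ζC x (.inr (.inl (.inl c))) := by
    intro x hx c
    have hm' := hmatch x
    have hmod := Nat.mod_lt x hBpos
    have hxeq : x = (φ.updList.length + inps.length + 3) * (x / (φ.updList.length + inps.length + 3)) + (x % (φ.updList.length + inps.length + 3)) := by
      have := Nat.div_add_mod x (φ.updList.length + inps.length + 3)
      omega
    rcases hshape x with ⟨h, he⟩ | h | ⟨h, h2⟩ | h | h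
    · simp only [matchesAt, he] at hm'
      exact hm'.2 _ (by simp)
    · exact absurd h hx
    · have he : flatten w x = Stmt0.havoc (Sum.inl (Sum.inr (inps[x % (φ.updList.length + inps.length + 3) - (φ.updList.length + 1)]'(by omega)))) := by
        conv_lhs => rw [show x = (φ.updList.length + inps.length + 3) * (x / (φ.updList.length + inps.length + 3)) + (φ.updList.length + 1 + (x % (φ.updList.length + inps.length + 3) - (φ.updList.length + 1))) by omega]
        exact hel_havoc (x / (φ.updList.length + inps.length + 3)) _ (by omega)
      simp only [matchesAt, he] at hm'
      exact hm' _ (by simp)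
    · have hx2 : x = (φ.updList.length + inps.length + 3) * (x / (φ.updList.length + inps.length + 3)) + (φ.updList.length + inps.length + 1) := by omega
      rw [hx2] at hm'
      simp only [matchesAt, hel_aP] at hm'
      rw [hx2]
      exact hm'.2 _
    · have hx2 : x = (φ.updList.length + inps.length + 3) * (x / (φ.updList.length + inps.length + 3)) + (φ.updList.length + inps.length + 2) := by omega
      rw [hx2] at hm'
      simp only [matchesAt, hel_aU] at hm'
      rw [hx2]
      exact hm'.2 _
  -- preservation of inputs
  have hstep_inp : ∀ x, (x % (φ.updList.length + inps.length + 3) ≤ φ.updList.length ∨ φ.updList.length + inps.length < x % (φ.updList.length + inps.length + 3)) → ∀ ii : I,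
      ζC x (.inr (.inl (.inr ii))) = prevA initC ζC x (.inr (.inl (.inr ii))) := by
    intro x hx ii
    have hm' := hmatch x
    have hmod := Nat.mod_lt x hBpos
    have hxeq : x = (φ.updList.length + inps.length + 3) * (x / (φ.updList.length + inps.length + 3)) + (x % (φ.updList.length + inps.length + 3)) := by
      have := Nat.div_add_mod x (φ.updList.length + inps.length + 3)
      omega
    rcases hshape x with ⟨h, he⟩ | h | ⟨h, h2⟩ | h | h
    · simp only [matchesAt, he] at hm'
      exact hm'.2 _ (by simp)
    · have he : flatten w x = (σ (x / (φ.updList.length + inps.length + 3))).embed := by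
        conv_lhs => rw [show x = (φ.updList.length + inps.length + 3) * (x / (φ.updList.length + inps.length + 3)) + φ.updList.length by
          have := Nat.div_add_mod x (φ.updList.length + inps.length + 3)
          omega]
        exact hel_stmt (x / (φ.updList.length + inps.length + 3))
      cases hσ : σ (x / (φ.updList.length + inps.length + 3)) with
      | assert τ =>
        rw [hσ] at he
        simp only [Stmt0.embed, matchesAt, he] at hm'
        exact hm'.2 _
      | assign c τ =>
        rw [hσ] at he
        simp only [Stmt0.embed, matchesAt, he] at hm'
        exact hm'.2 _ (by simp)
      | havoc c =>
        rw [hσ] at he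
        simp only [Stmt0.embed, matchesAt, he] at hm'
        exact hm' _ (by simp)
    · omega
    · have hx2 : x = (φ.updList.length + inps.length + 3) * (x / (φ.updList.length + inps.length + 3)) + (φ.updList.length + inps.length + 1) := by omega
      rw [hx2] at hm'
      simp only [matchesAt, hel_aP] at hm'
      rw [hx2]
      exact hm'.2 _
    · have hx2 : x = (φ.updList.length + inps.length + 3) * (x / (φ.updList.length + inps.length + 3)) + (φ.updList.length + inps.length + 2) := by omega
      rw [hx2] at hm'
      simp only [matchesAt, hel_aU] at hm'
      rw [hx2]
      exact hm'.2 _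
  -- preservation of tmp cells
  have hstep_tmp : ∀ x p, x % (φ.updList.length + inps.length + 3) ≠ p → ζC x (.inr (.inr p)) = prevA initC ζC x (.inr (.inr p)) := by
    intro x p hx
    have hm' := hmatch x
    have hmod := Nat.mod_lt x hBpos
    have hxeq : x = (φ.updList.length + inps.length + 3) * (x / (φ.updList.length + inps.length + 3)) + (x % (φ.updList.length + inps.length + 3)) := by
      have := Nat.div_add_mod x (φ.updList.length + inps.length + 3)
      omega
    rcases hshape x with ⟨h, he⟩ | h | ⟨h, h2⟩ | h | h
    · simp only [matchesAt, he] at hm'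
      refine hm'.2 _ ?_
      simp only [ne_eq, Sum.inr.injEq]
      omega
    · have he : flatten w x = (σ (x / (φ.updList.length + inps.length + 3))).embed := by
        conv_lhs => rw [show x = (φ.updList.length + inps.length + 3) * (x / (φ.updList.length + inps.length + 3)) + φ.updList.length by
          have := Nat.div_add_mod x (φ.updList.length + inps.length + 3)
          omega]
        exact hel_stmt (x / (φ.updList.length + inps.length + 3))
      cases hσ : σ (x / (φ.updList.length + inps.length + 3)) with
      | assert τ =>
        rw [hσ] at he
        simp only [Stmt0.embed, matchesAt, he] at hm'
        exact hm'.2 _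
      | assign c τ =>
        rw [hσ] at he
        simp only [Stmt0.embed, matchesAt, he] at hm'
        exact hm'.2 _ (by simp)
      | havoc c =>
        rw [hσ] at he
        simp only [Stmt0.embed, matchesAt, he] at hm'
        exact hm' _ (by simp)
    · have he : flatten w x = Stmt0.havoc (Sum.inl (Sum.inr (inps[x % (φ.updList.length + inps.length + 3) - (φ.updList.length + 1)]'(by omega)))) := by
        conv_lhs => rw [show x = (φ.updList.length + inps.length + 3) * (x / (φ.updList.length + inps.length + 3)) + (φ.updList.length + 1 + (x % (φ.updList.length + inps.length + 3) - (φ.updList.length + 1))) by omega]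
        exact hel_havoc (x / (φ.updList.length + inps.length + 3)) _ (by omega)
      simp only [matchesAt, he] at hm'
      exact hm' _ (by simp)
    · have hx2 : x = (φ.updList.length + inps.length + 3) * (x / (φ.updList.length + inps.length + 3)) + (φ.updList.length + inps.length + 1) := by omega
      rw [hx2] at hm'
      simp only [matchesAt, hel_aP] at hm'
      rw [hx2]
      exact hm'.2 _
    · have hx2 : x = (φ.updList.length + inps.length + 3) * (x / (φ.updList.length + inps.length + 3)) + (φ.updList.length + inps.length + 2) := by omega
      rw [hx2] at hm'
      simp only [matchesAt, hel_aU] at hm'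
      rw [hx2]
      exact hm'.2 _

  -- constancy of coordinates over step-free ranges
  have hconst_cell : ∀ lo hi, lo ≤ hi → (∀ j, lo ≤ j → j < hi → j % (φ.updList.length + inps.length + 3) ≠ φ.updList.length) → ∀ c : C,
      prevA initC ζC hi (.inr (.inl (.inl c))) = prevA initC ζC lo (.inr (.inl (.inl c))) := by
    intro lo hi hle hcond c
    exact constOn (fun x => prevA initC ζC x (.inr (.inl (.inl c)))) lo hi hle
      (fun j hj1 hj2 => hstep_cell j (hcond j hj1 hj2) c)
  have hconst_inp : ∀ lo hi, lo ≤ hi →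
      (∀ j, lo ≤ j → j < hi → (j % (φ.updList.length + inps.length + 3) ≤ φ.updList.length ∨ φ.updList.length + inps.length < j % (φ.updList.length + inps.length + 3))) → ∀ ii : I,
      prevA initC ζC hi (.inr (.inl (.inr ii))) = prevA initC ζC lo (.inr (.inl (.inr ii))) := by
    intro lo hi hle hcond ii
    exact constOn (fun x => prevA initC ζC x (.inr (.inl (.inr ii)))) lo hi hle
      (fun j hj1 hj2 => hstep_inp j (hcond j hj1 hj2) ii)
  have hconst_tmp : ∀ p lo hi, lo ≤ hi → (∀ j, lo ≤ j → j < hi → j % (φ.updList.length + inps.length + 3) ≠ p) →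
      prevA initC ζC hi (.inr (.inr p)) = prevA initC ζC lo (.inr (.inr p)) := by
    intro p lo hi hle hcond
    exact constOn (fun x => prevA initC ζC x (.inr (.inr p))) lo hi hle
      (fun j hj1 hj2 => hstep_tmp j p (hcond j hj1 hj2))
  have fcell_post : ∀ t d c, φ.updList.length < d → d ≤ φ.updList.length + inps.length + 2 →
      prevA initC ζC ((φ.updList.length + inps.length + 3) * t + d) (.inr (.inl (.inl c))) = (redC (φ.updList.length + inps.length + 3) (φ.updList.length + inps.length) ζC) t (.inr c) := by
    intro t d c h1 h2
    have e1 := hconst_cell ((φ.updList.length + inps.length + 3) * t + (φ.updList.length + 1)) ((φ.updList.length + inps.length + 3) * t + d) (by omega) (fun j hj1 hj2 => by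
      have hmw := mod_window (φ.updList.length + inps.length + 3) t φ.updList.length (φ.updList.length + inps.length + 2) j (by omega) (by omega) (by omega)
      omega) c
    have e2 := hconst_cell ((φ.updList.length + inps.length + 3) * t + (φ.updList.length + 1)) ((φ.updList.length + inps.length + 3) * t + (φ.updList.length + inps.length + 1)) (by omega)
      (fun j hj1 hj2 => by
        have hmw := mod_window (φ.updList.length + inps.length + 3) t φ.updList.length (φ.updList.length + inps.length + 2) j (by omega) (by omega) (by omega)
        omega) c
    have e3 : prevA initC ζC ((φ.updList.length + inps.length + 3) * t + (φ.updList.length + inps.length + 1)) (.inr (.inl (.inl c))) =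
        (redC (φ.updList.length + inps.length + 3) (φ.updList.length + inps.length) ζC) t (.inr c) := by
      rw [show (φ.updList.length + inps.length + 3) * t + (φ.updList.length + inps.length + 1) = ((φ.updList.length + inps.length + 3) * t + (φ.updList.length + inps.length)) + 1 by omega]
      rfl
    rw [e1, ← e3, e2]
  have fcell_pre : ∀ t d c, d ≤ φ.updList.length →
      prevA initC ζC ((φ.updList.length + inps.length + 3) * t + d) (.inr (.inl (.inl c))) = prevA init (redC (φ.updList.length + inps.length + 3) (φ.updList.length + inps.length) ζC) t (.inr c) := by
    intro t d c hd
    cases t with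
    | zero =>
      rw [show (φ.updList.length + inps.length + 3) * 0 + d = d by omega]
      have e1 := hconst_cell 0 d (by omega) (fun j hj1 hj2 => by
        rw [Nat.mod_eq_of_lt (by omega)]
        omega) c
      rw [e1]
      exact hic c
    | succ s =>
      have hmul : (φ.updList.length + inps.length + 3) * (s + 1) = (φ.updList.length + inps.length + 3) * s + (φ.updList.length + inps.length + 3) := Nat.mul_succ (φ.updList.length + inps.length + 3) s
      have e1 := hconst_cell ((φ.updList.length + inps.length + 3) * s + (φ.updList.length + 1)) ((φ.updList.length + inps.length + 3) * (s + 1) + d) (by omega)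
        (fun j hj1 hj2 => mod_ne_of_between (φ.updList.length + inps.length + 3) φ.updList.length s j (by omega) (by omega) (by omega)) c
      rw [e1]
      exact fcell_post s (φ.updList.length + 1) c (by omega) (by omega)
  have finp_post : ∀ t d ii, φ.updList.length + inps.length + 1 ≤ d → d ≤ φ.updList.length + inps.length + 2 →
      prevA initC ζC ((φ.updList.length + inps.length + 3) * t + d) (.inr (.inl (.inr ii))) = (redC (φ.updList.length + inps.length + 3) (φ.updList.length + inps.length) ζC) t (.inl ii) := by
    intro t d ii h1 h2
    have hbase : prevA initC ζC ((φ.updList.length + inps.length + 3) * t + (φ.updList.length + inps.length + 1)) (.inr (.inl (.inr ii))) =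
        (redC (φ.updList.length + inps.length + 3) (φ.updList.length + inps.length) ζC) t (.inl ii) := by
      rw [show (φ.updList.length + inps.length + 3) * t + (φ.updList.length + inps.length + 1) = ((φ.updList.length + inps.length + 3) * t + (φ.updList.length + inps.length)) + 1 by omega]
      rfl
    rcases (show d = φ.updList.length + inps.length + 1 ∨ d = φ.updList.length + inps.length + 2 by omega) with rfl | rfl
    · exact hbase
    · have hstep := hstep_inp ((φ.updList.length + inps.length + 3) * t + (φ.updList.length + inps.length + 1)) (Or.inr (by
        have hdm := div_mod_block (φ.updList.length + inps.length + 3) t (φ.updList.length + inps.length + 1) hBpos (by omega)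
        omega)) ii
      rw [show (φ.updList.length + inps.length + 3) * t + (φ.updList.length + inps.length + 2) = ((φ.updList.length + inps.length + 3) * t + (φ.updList.length + inps.length + 1)) + 1 by omega]
      calc prevA initC ζC (((φ.updList.length + inps.length + 3) * t + (φ.updList.length + inps.length + 1)) + 1) (.inr (.inl (.inr ii)))
          = ζC ((φ.updList.length + inps.length + 3) * t + (φ.updList.length + inps.length + 1)) (.inr (.inl (.inr ii))) := rfl
        _ = prevA initC ζC ((φ.updList.length + inps.length + 3) * t + (φ.updList.length + inps.length + 1)) (.inr (.inl (.inr ii))) := hstep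
        _ = (redC (φ.updList.length + inps.length + 3) (φ.updList.length + inps.length) ζC) t (.inl ii) := hbase
  have finp_pre : ∀ t d ii, d ≤ φ.updList.length →
      prevA initC ζC ((φ.updList.length + inps.length + 3) * t + d) (.inr (.inl (.inr ii))) = prevA init (redC (φ.updList.length + inps.length + 3) (φ.updList.length + inps.length) ζC) t (.inl ii) := by
    intro t d ii hd
    cases t with
    | zero =>
      rw [show (φ.updList.length + inps.length + 3) * 0 + d = d by omega]
      have e1 := hconst_inp 0 d (by omega) (fun j hj1 hj2 => by
        rw [Nat.mod_eq_of_lt (by omega)]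
        omega) ii
      rw [e1]
      exact hii ii
    | succ s =>
      have hmul : (φ.updList.length + inps.length + 3) * (s + 1) = (φ.updList.length + inps.length + 3) * s + (φ.updList.length + inps.length + 3) := Nat.mul_succ (φ.updList.length + inps.length + 3) s
      have e1 := hconst_inp ((φ.updList.length + inps.length + 3) * s + (φ.updList.length + inps.length + 1)) ((φ.updList.length + inps.length + 3) * (s + 1) + d) (by omega)
        (fun j hj1 hj2 => by
          have := inp_region (φ.updList.length + inps.length + 3) φ.updList.length inps.length s j rfl (by omega) (by omega)
          omega) ii
      rw [e1]
      exact finp_post s (φ.updList.length + inps.length + 1) ii (by omega) (by omega)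
  have ftmp : ∀ t j, (hj : j < φ.updList.length) → ∀ d, j < d → d ≤ φ.updList.length + inps.length + 2 →
      prevA initC ζC ((φ.updList.length + inps.length + 3) * t + d) (.inr (.inr j)) = ζC ((φ.updList.length + inps.length + 3) * t + j) (.inr (.inr j)) := by
    intro t j hj d h1 h2
    have e1 := hconst_tmp j ((φ.updList.length + inps.length + 3) * t + (j + 1)) ((φ.updList.length + inps.length + 3) * t + d) (by omega) (fun x hx1 hx2 => by
      have hmw := mod_window2 (φ.updList.length + inps.length + 3) t (φ.updList.length + inps.length + 2) x (by omega) (by omega) (by omega)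
      omega)
    rw [e1, show (φ.updList.length + inps.length + 3) * t + (j + 1) = ((φ.updList.length + inps.length + 3) * t + j) + 1 by omega]
    rfl
  have gpull_pre : ∀ t d, d ≤ φ.updList.length →
      pull (prevA initC ζC ((φ.updList.length + inps.length + 3) * t + d)) = prevA init (redC (φ.updList.length + inps.length + 3) (φ.updList.length + inps.length) ζC) t := by
    intro t d hd
    funext x
    cases x with
    | inl ii => exact finp_pre t d ii hd
    | inr c => exact fcell_pre t d c hd
  have gpull_post : ∀ t d, φ.updList.length + inps.length + 1 ≤ d → d ≤ φ.updList.length + inps.length + 2 →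
      pull (prevA initC ζC ((φ.updList.length + inps.length + 3) * t + d)) = (redC (φ.updList.length + inps.length + 3) (φ.updList.length + inps.length) ζC) t := by
    intro t d h1 h2
    funext x
    cases x with
    | inl ii => exact finp_post t d ii h1 h2
    | inr c => exact fcell_post t d c (by omega) h2
  -- the reduced computation matches σ
  have hMatch : Matches T init (redC (φ.updList.length + inps.length + 3) (φ.updList.length + inps.length) ζC) σ := by
    intro t
    have hm' := hmatch ((φ.updList.length + inps.length + 3) * t + φ.updList.length)
    have he := hel_stmt t
    cases hσ : σ t with
    | assert τ =>
      rw [hσ] at he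
      simp only [Stmt0.embed] at he
      simp only [matchesAt, he] at hm'
      simp only [matchesAt, hσ]
      refine ⟨?_, ?_⟩
      · have h1 := hm'.1
        rw [embed_eval, gpull_pre t φ.updList.length le_rfl] at h1
        exact h1
      · intro c
        have h2 := hm'.2 (.inl (.inl c))
        calc (redC (φ.updList.length + inps.length + 3) (φ.updList.length + inps.length) ζC) t (.inr c)
            = prevA initC ζC ((φ.updList.length + inps.length + 3) * t + (φ.updList.length + 1)) (.inr (.inl (.inl c))) :=
              (fcell_post t (φ.updList.length + 1) c (by omega) (by omega)).symm
          _ = ζC ((φ.updList.length + inps.length + 3) * t + φ.updList.length) (.inr (.inl (.inl c))) := by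
              rw [show (φ.updList.length + inps.length + 3) * t + (φ.updList.length + 1) = ((φ.updList.length + inps.length + 3) * t + φ.updList.length) + 1 by omega]
              rfl
          _ = prevA initC ζC ((φ.updList.length + inps.length + 3) * t + φ.updList.length) (.inr (.inl (.inl c))) := h2
          _ = prevA init (redC (φ.updList.length + inps.length + 3) (φ.updList.length + inps.length) ζC) t (.inr c) := fcell_pre t φ.updList.length c le_rfl
    | assign c τ =>
      rw [hσ] at he
      simp only [Stmt0.embed] at he
      simp only [matchesAt, he] at hm'
      simp only [matchesAt, hσ]
      refine ⟨?_, ?_⟩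
      · have h1 := hm'.1
        rw [embed_eval, gpull_pre t φ.updList.length le_rfl] at h1
        calc (redC (φ.updList.length + inps.length + 3) (φ.updList.length + inps.length) ζC) t (.inr c)
            = prevA initC ζC ((φ.updList.length + inps.length + 3) * t + (φ.updList.length + 1)) (.inr (.inl (.inl c))) :=
              (fcell_post t (φ.updList.length + 1) c (by omega) (by omega)).symm
          _ = ζC ((φ.updList.length + inps.length + 3) * t + φ.updList.length) (.inr (.inl (.inl c))) := by
              rw [show (φ.updList.length + inps.length + 3) * t + (φ.updList.length + 1) = ((φ.updList.length + inps.length + 3) * t + φ.updList.length) + 1 by omega]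
              rfl
          _ = τ.eval T (prevA init (redC (φ.updList.length + inps.length + 3) (φ.updList.length + inps.length) ζC) t) := h1
      · intro c' hc'
        have h2 := hm'.2 (.inl (.inl c')) (by simp [hc'])
        calc (redC (φ.updList.length + inps.length + 3) (φ.updList.length + inps.length) ζC) t (.inr c')
            = prevA initC ζC ((φ.updList.length + inps.length + 3) * t + (φ.updList.length + 1)) (.inr (.inl (.inl c'))) :=
              (fcell_post t (φ.updList.length + 1) c' (by omega) (by omega)).symm
          _ = ζC ((φ.updList.length + inps.length + 3) * t + φ.updList.length) (.inr (.inl (.inl c'))) := by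
              rw [show (φ.updList.length + inps.length + 3) * t + (φ.updList.length + 1) = ((φ.updList.length + inps.length + 3) * t + φ.updList.length) + 1 by omega]
              rfl
          _ = prevA initC ζC ((φ.updList.length + inps.length + 3) * t + φ.updList.length) (.inr (.inl (.inl c'))) := h2
          _ = prevA init (redC (φ.updList.length + inps.length + 3) (φ.updList.length + inps.length) ζC) t (.inr c') := fcell_pre t φ.updList.length c' le_rfl
    | havoc c =>
      rw [hσ] at he
      simp only [Stmt0.embed] at he
      simp only [matchesAt, he] at hm'
      simp only [matchesAt, hσ]
      intro c' hc'
      have h2 := hm' (.inl (.inl c')) (by simp [hc'])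
      calc (redC (φ.updList.length + inps.length + 3) (φ.updList.length + inps.length) ζC) t (.inr c')
          = prevA initC ζC ((φ.updList.length + inps.length + 3) * t + (φ.updList.length + 1)) (.inr (.inl (.inl c'))) :=
            (fcell_post t (φ.updList.length + 1) c' (by omega) (by omega)).symm
        _ = ζC ((φ.updList.length + inps.length + 3) * t + φ.updList.length) (.inr (.inl (.inl c'))) := by
            rw [show (φ.updList.length + inps.length + 3) * t + (φ.updList.length + 1) = ((φ.updList.length + inps.length + 3) * t + φ.updList.length) + 1 by omega]
            rfl
        _ = prevA initC ζC ((φ.updList.length + inps.length + 3) * t + φ.updList.length) (.inr (.inl (.inl c'))) := h2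
        _ = prevA init (redC (φ.updList.length + inps.length + 3) (φ.updList.length + inps.length) ζC) t (.inr c') := fcell_pre t φ.updList.length c' le_rfl
  -- atom correspondences
  have hPred : ∀ t τ, τ ∈ φ.predList →
      (Sum.inl τ ∈ lab t ↔ TSL.sat T init (redC (φ.updList.length + inps.length + 3) (φ.updList.length + inps.length) ζC) (.pred τ) t) := by
    intro t τ hτ
    have hm' := hmatch ((φ.updList.length + inps.length + 3) * t + (φ.updList.length + inps.length + 1))
    simp only [matchesAt, hel_aP t] at hm'
    have h1 := (conjTerm_true T O _ _).mp hm'.1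
    have h2 := h1 _ (List.mem_map_of_mem hτ)
    simp only [TSL.sat]
    by_cases hmem : Sum.inl τ ∈ lab t
    · rw [if_pos hmem] at h2
      rw [embed_eval, gpull_post t (φ.updList.length + inps.length + 1) le_rfl (by omega)] at h2
      exact iff_of_true hmem h2
    · rw [if_neg hmem] at h2
      have h3 := (neg_true T O _ _).mp h2
      rw [embed_eval, gpull_post t (φ.updList.length + inps.length + 1) le_rfl (by omega)] at h3
      exact iff_of_false hmem h3
  have hUpd : ∀ t u, u ∈ φ.updList →
      (Sum.inr u ∈ lab t ↔ TSL.sat T init (redC (φ.updList.length + inps.length + 3) (φ.updList.length + inps.length) ζC) (.upd u.1 u.2) t) := by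
    intro t u hu
    obtain ⟨j, hj, rfl⟩ := List.getElem_of_mem hu
    have hm' := hmatch ((φ.updList.length + inps.length + 3) * t + (φ.updList.length + inps.length + 2))
    simp only [matchesAt, hel_aU t] at hm'
    have h1 := (conjTerm_true T O _ _).mp hm'.1
    have hjlen : j < (φ.updList.mapIdx fun j u =>
        let eqt : FTerm Empty (CStar I C) F :=
          .app O.feq [.cell (Sum.inl (Sum.inl u.1)), .cell (Sum.inr j)]
        if Sum.inr u ∈ lab t then eqt else .app O.fneg [eqt]).length := by
      rw [List.length_mapIdx]
      exact hj
    have hmem_el := List.getElem_mem hjlen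
    rw [List.getElem_mapIdx] at hmem_el
    have h2 := h1 _ hmem_el
    have h2' : (if Sum.inr (φ.updList[j]'hj) ∈ lab t then
        FTerm.app O.feq [FTerm.cell (Sum.inl (Sum.inl (φ.updList[j]'hj).1)),
          FTerm.cell (Sum.inr j)]
      else FTerm.app O.fneg [FTerm.app O.feq
        [FTerm.cell (Sum.inl (Sum.inl (φ.updList[j]'hj).1)), FTerm.cell (Sum.inr j)]]).eval T
        (prevA initC ζC ((φ.updList.length + inps.length + 3) * t + (φ.updList.length + inps.length + 2))) = T.vtrue := h2
    have hm'' := hmatch ((φ.updList.length + inps.length + 3) * t + j)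
    simp only [matchesAt, hel_save t j hj] at hm''
    have h4 := hm''.1
    rw [embed_eval, gpull_pre t j (le_of_lt hj)] at h4
    simp only [TSL.sat]
    by_cases hmem : Sum.inr (φ.updList[j]'hj) ∈ lab t
    · rw [if_pos hmem] at h2'
      have h3 := (feq_true T O _ _ _).mp h2'
      simp only [FTerm.eval] at h3
      rw [fcell_post t (φ.updList.length + inps.length + 2) (φ.updList[j]'hj).1 (by omega) (by omega)] at h3
      rw [ftmp t j hj (φ.updList.length + inps.length + 2) (by omega) (by omega)] at h3
      rw [h4] at h3
      exact iff_of_true hmem h3.symm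
    · rw [if_neg hmem] at h2'
      have h3 := (neg_true T O _ _).mp h2'
      refine iff_of_false hmem ?_
      intro hsat
      apply h3
      refine (feq_true T O _ _ _).mpr ?_
      simp only [FTerm.eval]
      rw [fcell_post t (φ.updList.length + inps.length + 2) (φ.updList[j]'hj).1 (by omega) (by omega)]
      rw [ftmp t j hj (φ.updList.length + inps.length + 2) (by omega) (by omega)]
      rw [h4]
      exact hsat.symm
  -- conclusion
  have hPw : P.Accepts σ :=
    ⟨fun t => (r t).1, ⟨congrArg Prod.fst hr0, hPδ⟩,
      fun n => ⟨n, le_rfl, by rw [hPAcc]; trivial⟩⟩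
  have hφζ := hSat σ hPw (redC (φ.updList.length + inps.length + 3) (φ.updList.length + inps.length) ζC) hMatch
  have hAl : A.Accepts lab := ⟨fun t => (r t).2, ⟨congrArg Prod.snd hr0, hAδ⟩, hrinf⟩
  have hneg := (hA lab).mp hAl
  exact hneg ((tsl_iff_ltl T init (redC (φ.updList.length + inps.length + 3) (φ.updList.length + inps.length) ζC) lab φ hPred hUpd 0).mpr hφζ)

end DirMp


/-- The word of atoms that hold along a computation. -/
private def labW (T : Thy V F) (init : Assign V I C) (ζ : ℕ → Assign V I C) :
    ℕ → Set (AP I C F) :=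
  fun t => {a | Sum.elim (fun τ => TSL.sat T init ζ (.pred τ) t)
    (fun u => TSL.sat T init ζ (.upd u.1 u.2) t) a}

section DirMpr
variable {Qp Qa : Type}

private theorem dir_mpr (T : Thy V F) (O : Ops V F T)
    (init : Assign V I C) (initC : Assign V Empty (CStar I C))
    (hic : ∀ c : C, initC (.inr (.inl (.inl c))) = init (.inr c))
    (hii : ∀ i : I, initC (.inr (.inl (.inr i))) = init (.inl i))
    (inps : List I) (hinps : ∀ i : I, i ∈ inps)
    (P : Buchi (Stmt0 I C F) Qp)
    (φ : TSL I C F)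
    (A : Buchi (Set (AP I C F)) Qa)
    (hA : ∀ w : ℕ → Set (AP I C F), A.Accepts w ↔ (LTL.not φ.toLTL).sat w 0)
    (hno : ¬ ∃ w, (product T O (liftB P) A φ.predList φ.updList inps).Accepts w ∧
      Feasible T initC w) :
    SatisfiesTSL T init P φ := by
  intro σ hPacc ζ hM
  by_contra hns
  obtain ⟨rP, ⟨hrP0, hrPs⟩, -⟩ := hPacc
  have hltl : (LTL.not φ.toLTL).sat (labW T init ζ) 0 := by
    intro hcon
    exact hns ((tsl_iff_ltl T init ζ (labW T init ζ) φ (fun t τ _ => Iff.rfl)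
      (fun t u _ => Iff.rfl) 0).mp hcon)
  obtain ⟨rA, ⟨hrA0, hrAs⟩, hrAinf⟩ := (hA (labW T init ζ)).mpr hltl
  refine hno ⟨fun t => combine T O φ.predList φ.updList inps [σ t] (labW T init ζ t), ?_, ?_⟩
  · refine ⟨fun t => (rP t, rA t), ⟨?_, fun t => ?_⟩, fun n => hrAinf n⟩
    · rw [Prod.ext_iff]
      exact ⟨hrP0, hrA0⟩
    · exact ⟨⟨[σ t], by simp⟩, labW T init ζ t, ⟨σ t, hrPs t, rfl⟩, hrAs t, rfl⟩
  · refine ⟨adapt T φ.updList inps init initC ζ, ?_⟩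
    have hBpos : (0 : ℕ) < (φ.updList.length + inps.length + 3) := by omega
    have hlen : ∀ t, (((fun t => combine T O φ.predList φ.updList inps [σ t]
        (labW T init ζ t)) t).1).length = (φ.updList.length + inps.length + 3) :=
      fun t => combine_len T O φ.predList φ.updList inps (σ t) (labW T init ζ t)
    have hflat := flatten_const
      (fun t => combine T O φ.predList φ.updList inps [σ t] (labW T init ζ t)) (φ.updList.length + inps.length + 3) hBpos hlen
    intro idx
    obtain ⟨b, i, hiB, rfl⟩ : ∃ b i, i < (φ.updList.length + inps.length + 3) ∧ idx = (φ.updList.length + inps.length + 3) * b + i := by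
      refine ⟨idx / (φ.updList.length + inps.length + 3), idx % (φ.updList.length + inps.length + 3), Nat.mod_lt idx hBpos, ?_⟩
      have := Nat.div_add_mod idx (φ.updList.length + inps.length + 3)
      omega
    have hdm := div_mod_block (φ.updList.length + inps.length + 3) b i hBpos hiB
    have hel := hflat ((φ.updList.length + inps.length + 3) * b + i)
    simp only [hdm.1, hdm.2] at hel
    rcases lt_or_ge i φ.updList.length with hiM | hiM
    · -- save statement: tmp_i := τ_i
      have hel2 : flatten (fun t => combine T O φ.predList φ.updList inps [σ t]
          (labW T init ζ t)) ((φ.updList.length + inps.length + 3) * b + i) =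
          Stmt0.assign (Sum.inr i) ((φ.updList[i]'hiM).2.embed) := by
        rw [hel]
        exact combine_get_save T O φ.predList φ.updList inps (σ b) (labW T init ζ b) i hiM
      simp only [matchesAt, hel2]
      constructor
      · rw [adapt_tmp]
        simp only [hdm.1, hdm.2]
        rw [if_pos hiM, if_pos le_rfl, embed_eval]
        have hpull : pull (prevA initC (adapt T φ.updList inps init initC ζ) ((φ.updList.length + inps.length + 3) * b + i)) = prevA init ζ b := by
          funext x
          cases x with
          | inl ii =>
            show prevA initC (adapt T φ.updList inps init initC ζ) ((φ.updList.length + inps.length + 3) * b + i) (.inr (.inl (.inr ii))) = prevA init ζ b (.inl ii)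
            rw [padapt_inp T φ.updList inps init initC ζ hii]
            simp only [hdm.1, hdm.2]
            rw [if_pos (by omega)]
          | inr c =>
            show prevA initC (adapt T φ.updList inps init initC ζ) ((φ.updList.length + inps.length + 3) * b + i) (.inr (.inl (.inl c))) = prevA init ζ b (.inr c)
            rw [padapt_cell T φ.updList inps init initC ζ hic]
            simp only [hdm.1, hdm.2]
            rw [if_pos (by omega)]
        rw [hpull]
        simp [NT, List.getElem?_eq_getElem hiM]
      · intro x hx
        rcases x with (c | ii) | p
        · rw [adapt_cell, padapt_cell T φ.updList inps init initC ζ hic]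
          simp only [hdm.1, hdm.2]
          rw [if_pos (by omega), if_pos (by omega)]
        · rw [adapt_inp, padapt_inp T φ.updList inps init initC ζ hii]
          simp only [hdm.1, hdm.2]
          rw [if_pos (by omega), if_pos (by omega)]
        · have hpi : p ≠ i := by simpa using hx
          rw [adapt_tmp, padapt_tmp]
          simp only [hdm.1, hdm.2]
          split_ifs <;> first | rfl | omega | exact (‹False›).elim
    · rcases eq_or_lt_of_le hiM with hieq | hgt
      · -- the program statement
        subst hieq
        have hel2 : flatten (fun t => combine T O φ.predList φ.updList inps [σ t]
            (labW T init ζ t)) ((φ.updList.length + inps.length + 3) * b + φ.updList.length) = (σ b).embed := by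
          rw [hel]
          exact combine_get_stmt T O φ.predList φ.updList inps (σ b) (labW T init ζ b)
        have hMb := hM b
        have hpull : pull (prevA initC (adapt T φ.updList inps init initC ζ) ((φ.updList.length + inps.length + 3) * b + φ.updList.length)) = prevA init ζ b := by
          funext x
          cases x with
          | inl ii =>
            show prevA initC (adapt T φ.updList inps init initC ζ) ((φ.updList.length + inps.length + 3) * b + φ.updList.length) (.inr (.inl (.inr ii))) = prevA init ζ b (.inl ii)
            rw [padapt_inp T φ.updList inps init initC ζ hii]
            simp only [hdm.1, hdm.2]
            rw [if_pos (by omega)]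
          | inr c =>
            show prevA initC (adapt T φ.updList inps init initC ζ) ((φ.updList.length + inps.length + 3) * b + φ.updList.length) (.inr (.inl (.inl c))) = prevA init ζ b (.inr c)
            rw [padapt_cell T φ.updList inps init initC ζ hic]
            simp only [hdm.1, hdm.2]
            rw [if_pos (by omega)]
        have hNTee : ∀ b' p, φ.updList.length ≤ p → NT T φ.updList init initC ζ b' p = initC (.inr (.inr p)) := by
          intro b' p hp
          simp [NT, List.getElem?_eq_none (show φ.updList.length ≤ p from hp)]
        have hOTee : ∀ b' p, φ.updList.length ≤ p → OT T φ.updList init initC ζ b' p = initC (.inr (.inr p)) := by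
          intro b' p hp
          cases b' with
          | zero => rfl
          | succ b'' => exact hNTee b'' p hp
        have htmpp : ∀ p : ℕ, adapt T φ.updList inps init initC ζ ((φ.updList.length + inps.length + 3) * b + φ.updList.length) (.inr (.inr p)) =
            prevA initC (adapt T φ.updList inps init initC ζ) ((φ.updList.length + inps.length + 3) * b + φ.updList.length) (.inr (.inr p)) := by
          intro p
          rw [adapt_tmp, padapt_tmp]
          simp only [hdm.1, hdm.2]
          by_cases hpM : p < φ.updList.length
          · rw [if_neg (by omega), if_neg (by omega), if_pos le_rfl, if_pos hpM]
          · rw [if_neg (by omega)]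
            split_ifs <;> simp [hNTee _ p (by omega), hOTee _ p (by omega)]
        have hcellv : ∀ c : C, adapt T φ.updList inps init initC ζ ((φ.updList.length + inps.length + 3) * b + φ.updList.length) (.inr (.inl (.inl c))) = ζ b (.inr c) := by
          intro c
          rw [adapt_cell]
          simp only [hdm.1, hdm.2]
          rw [if_neg (by omega)]
        have hcellp : ∀ c : C, prevA initC (adapt T φ.updList inps init initC ζ) ((φ.updList.length + inps.length + 3) * b + φ.updList.length) (.inr (.inl (.inl c))) =
            prevA init ζ b (.inr c) := by
          intro c
          rw [padapt_cell T φ.updList inps init initC ζ hic]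
          simp only [hdm.1, hdm.2]
          rw [if_pos (by omega)]
        have hinpp : ∀ ii : I, adapt T φ.updList inps init initC ζ ((φ.updList.length + inps.length + 3) * b + φ.updList.length) (.inr (.inl (.inr ii))) =
            prevA initC (adapt T φ.updList inps init initC ζ) ((φ.updList.length + inps.length + 3) * b + φ.updList.length) (.inr (.inl (.inr ii))) := by
          intro ii
          rw [adapt_inp, padapt_inp T φ.updList inps init initC ζ hii]
          simp only [hdm.1, hdm.2]
          rw [if_pos (by omega), if_pos (by omega)]
        cases hσ : σ b with
        | assert τ =>
          rw [hσ] at hel2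
          simp only [Stmt0.embed] at hel2
          simp only [matchesAt, hel2]
          simp only [matchesAt, hσ] at hMb
          constructor
          · rw [embed_eval, hpull]
            exact hMb.1
          · intro x
            rcases x with (c | ii) | p
            · rw [hcellv, hcellp]
              exact hMb.2 c
            · exact hinpp ii
            · exact htmpp p
        | assign c τ =>
          rw [hσ] at hel2
          simp only [Stmt0.embed] at hel2
          simp only [matchesAt, hel2]
          simp only [matchesAt, hσ] at hMb
          constructor
          · rw [hcellv c, embed_eval, hpull]
            exact hMb.1
          · intro x hx
            rcases x with (c' | ii) | p
            · have hcc : c' ≠ c := by simpa using hx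
              rw [hcellv, hcellp]
              exact hMb.2 c' hcc
            · exact hinpp ii
            · exact htmpp p
        | havoc c =>
          rw [hσ] at hel2
          simp only [Stmt0.embed] at hel2
          simp only [matchesAt, hel2]
          simp only [matchesAt, hσ] at hMb
          intro x hx
          rcases x with (c' | ii) | p
          · have hcc : c' ≠ c := by simpa using hx
            rw [hcellv, hcellp]
            exact hMb c' hcc
          · exact hinpp ii
          · exact htmpp p
      · rcases lt_or_ge i (φ.updList.length + inps.length + 1) with hiK | hiK
        · -- input havoc
          obtain ⟨d, hdK, rfl⟩ : ∃ d, d < inps.length ∧ i = φ.updList.length + 1 + d :=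
            ⟨i - (φ.updList.length + 1), by omega, by omega⟩
          have hel2 : flatten (fun t => combine T O φ.predList φ.updList inps [σ t]
              (labW T init ζ t)) ((φ.updList.length + inps.length + 3) * b + (φ.updList.length + 1 + d)) =
              Stmt0.havoc (Sum.inl (Sum.inr (inps[d]'hdK))) := by
            rw [hel]
            exact combine_get_havoc T O φ.predList φ.updList inps (σ b) (labW T init ζ b) d hdK
          simp only [matchesAt, hel2]
          intro x hx
          rcases x with (c | ii) | p
          · rw [adapt_cell, padapt_cell T φ.updList inps init initC ζ hic]
            simp only [hdm.1, hdm.2]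
            rw [if_neg (by omega), if_neg (by omega)]
          · have hne : ii ≠ inps[d]'hdK := by simpa using hx
            have hlt : inps.idxOf ii < inps.length := List.idxOf_lt_length_iff.mpr (hinps ii)
            have hidx : inps.idxOf ii ≠ d := by
              intro hcon
              have hget := List.getElem_idxOf (xs := inps) (x := ii) hlt
              simp only [hcon] at hget
              exact hne hget.symm
            rw [adapt_inp, padapt_inp T φ.updList inps init initC ζ hii]
            simp only [hdm.1, hdm.2]
            split_ifs <;> first | rfl | omega | exact (‹False›).elim
          · rw [adapt_tmp, padapt_tmp]
            simp only [hdm.1, hdm.2]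
            rw [if_neg (by omega), if_neg (by omega), if_neg (by omega)]
        · -- the two asserts
          have htmpk : ∀ p, prevA initC (adapt T φ.updList inps init initC ζ) ((φ.updList.length + inps.length + 3) * b + i) (.inr (.inr p)) =
              NT T φ.updList init initC ζ b p := by
            intro p
            rw [padapt_tmp]
            simp only [hdm.1, hdm.2]
            rw [if_neg (by omega), if_neg (by omega)]
          have hcellk : ∀ c : C, prevA initC (adapt T φ.updList inps init initC ζ) ((φ.updList.length + inps.length + 3) * b + i) (.inr (.inl (.inl c))) =
              ζ b (.inr c) := by
            intro c
            rw [padapt_cell T φ.updList inps init initC ζ hic]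
            simp only [hdm.1, hdm.2]
            rw [if_neg (by omega)]
          have hinpk : ∀ ii : I, prevA initC (adapt T φ.updList inps init initC ζ) ((φ.updList.length + inps.length + 3) * b + i) (.inr (.inl (.inr ii))) =
              ζ b (.inl ii) := by
            intro ii
            have hlt : inps.idxOf ii < inps.length := List.idxOf_lt_length_iff.mpr (hinps ii)
            rw [padapt_inp T φ.updList inps init initC ζ hii]
            simp only [hdm.1, hdm.2]
            split_ifs <;> first | rfl | omega | exact (‹False›).elim
          have hpullk : pull (prevA initC (adapt T φ.updList inps init initC ζ) ((φ.updList.length + inps.length + 3) * b + i)) = ζ b := by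
            funext x
            cases x with
            | inl ii => exact hinpk ii
            | inr c => exact hcellk c
          have hframe : ∀ x : CStar I C, adapt T φ.updList inps init initC ζ ((φ.updList.length + inps.length + 3) * b + i) (.inr x) =
              prevA initC (adapt T φ.updList inps init initC ζ) ((φ.updList.length + inps.length + 3) * b + i) (.inr x) := by
            intro x
            rcases x with (c | ii) | p
            · rw [adapt_cell, hcellk]
              simp only [hdm.1, hdm.2]
              rw [if_neg (by omega)]
            · have hlt : inps.idxOf ii < inps.length := List.idxOf_lt_length_iff.mpr (hinps ii)
              rw [adapt_inp, padapt_inp T φ.updList inps init initC ζ hii]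
              simp only [hdm.1, hdm.2]
              split_ifs <;> first | rfl | omega | exact (‹False›).elim
            · rw [adapt_tmp, htmpk]
              simp only [hdm.1, hdm.2]
              rw [if_neg (by omega)]
          rcases eq_or_lt_of_le hiK with hieq2 | hgt2
          · -- check_preds
            subst hieq2
            have hel2 : flatten (fun t => combine T O φ.predList φ.updList inps [σ t]
                (labW T init ζ t)) ((φ.updList.length + inps.length + 3) * b + (φ.updList.length + inps.length + 1)) =
                Stmt0.assert (conjTerm T O (φ.predList.map fun τ =>
                  if Sum.inl τ ∈ labW T init ζ b then τ.embed else .app O.fneg [τ.embed])) := by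
              rw [hel]
              exact combine_get_aP T O φ.predList φ.updList inps (σ b) (labW T init ζ b)
            simp only [matchesAt, hel2]
            refine ⟨?_, fun x => hframe x⟩
            rw [conjTerm_true]
            intro el hel3
            obtain ⟨τ, hτ, rfl⟩ := List.mem_map.mp hel3
            by_cases hmem : Sum.inl τ ∈ labW T init ζ b
            · rw [if_pos hmem, embed_eval, hpullk]
              exact hmem
            · rw [if_neg hmem, neg_true, embed_eval, hpullk]
              exact hmem
          · -- check_updates
            have hieq3 : i = φ.updList.length + inps.length + 2 := by omega
            subst hieq3
            have hel2 : flatten (fun t => combine T O φ.predList φ.updList inps [σ t]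
                (labW T init ζ t)) ((φ.updList.length + inps.length + 3) * b + (φ.updList.length + inps.length + 2)) =
                Stmt0.assert (conjTerm T O (φ.updList.mapIdx fun j u =>
                  let eqt : FTerm Empty (CStar I C) F :=
                    .app O.feq [.cell (Sum.inl (Sum.inl u.1)), .cell (Sum.inr j)]
                  if Sum.inr u ∈ labW T init ζ b then eqt else .app O.fneg [eqt])) := by
              rw [hel]
              exact combine_get_aU T O φ.predList φ.updList inps (σ b) (labW T init ζ b)
            simp only [matchesAt, hel2]
            refine ⟨?_, fun x => hframe x⟩
            rw [conjTerm_true]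
            intro el hel3
            obtain ⟨j, hj, rfl⟩ := List.getElem_of_mem hel3
            have hj' : j < φ.updList.length := by
              rw [List.length_mapIdx] at hj
              exact hj
            rw [List.getElem_mapIdx]
            show (if Sum.inr (φ.updList[j]'hj') ∈ labW T init ζ b then
                FTerm.app O.feq [FTerm.cell (Sum.inl (Sum.inl (φ.updList[j]'hj').1)),
                  FTerm.cell (Sum.inr j)]
              else FTerm.app O.fneg [FTerm.app O.feq
                [FTerm.cell (Sum.inl (Sum.inl (φ.updList[j]'hj').1)), FTerm.cell (Sum.inr j)]]).eval
                T (prevA initC (adapt T φ.updList inps init initC ζ) ((φ.updList.length + inps.length + 3) * b + (φ.updList.length + inps.length + 2))) = T.vtrue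
            have hNTj : NT T φ.updList init initC ζ b j =
                (φ.updList[j]'hj').2.eval T (prevA init ζ b) := by
              simp [NT, List.getElem?_eq_getElem hj']
            by_cases hmem : Sum.inr (φ.updList[j]'hj') ∈ labW T init ζ b
            · rw [if_pos hmem, feq_true]
              simp only [FTerm.eval]
              rw [hcellk, htmpk, hNTj]
              have hmem' : (φ.updList[j]'hj').2.eval T (prevA init ζ b) =
                  ζ b (.inr (φ.updList[j]'hj').1) := hmem
              exact hmem'.symm
            · rw [if_neg hmem, neg_true, feq_true]
              simp only [FTerm.eval]
              rw [hcellk, htmpk, hNTj]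
              intro hcon
              exact hmem (show (φ.updList[j]'hj').2.eval T (prevA init ζ b) =
                ζ b (.inr (φ.updList[j]'hj').1) from hcon.symm)

end DirMpr

end Aux

theorem tsl_model_checking
    {V I C F Qp Qa : Type} (T : Thy V F) (O : Ops V F T)
    (init : Assign V I C) (initC : Assign V Empty (CStar I C))
    (hic : ∀ c : C, initC (.inr (.inl (.inl c))) = init (.inr c))
    (hii : ∀ i : I, initC (.inr (.inl (.inr i))) = init (.inl i))
    (inps : List I) (hinps : ∀ i : I, i ∈ inps) (hnd : inps.Nodup)
    (P : Buchi (Stmt0 I C F) Qp) (hPAcc : P.Acc = Set.univ)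
    (φ : TSL I C F) (hφ : ∀ τ ∈ φ.predList, IsPredTerm T τ)
    (A : Buchi (Set (AP I C F)) Qa)
    (hA : ∀ w : ℕ → Set (AP I C F), A.Accepts w ↔ (LTL.not φ.toLTL).sat w 0) :
    SatisfiesTSL T init P φ ↔
      ¬ ∃ w, (product T O (liftB P) A φ.predList φ.updList inps).Accepts w ∧
        Feasible T initC w := by
  constructor
  · intro hSat
    exact dir_mp T O init initC hic hii inps P hPAcc φ A hA hSat
  · intro hno
    exact dir_mpr T O init initC hic hii inps hinps P φ A hA hno

end TSLMC
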